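/- arXiv:1104.4584 — 6 statements merged into one kernel-verified Lean document; each statement's English description precedes it below -/
import Mathlib

section
/- In the field ℚ(t,q) of rational functions in two indeterminates t and q, for every integer k ≥ 0: T_k(t,q) = Σ_{j=0}^{k} Σ_{i=0}^{j} (−1)^{j+i} · t^{2i} · q^{j^2 + i^2 + i} · [k−j choose i]_{q^2} · ( [k−i choose j−i]_{q^2} + t · [k−i−1 choose j−i−1]_{q^2} ). -/
/-- The polynomials `T_k(t,q)` defined by `T_0 = 1` and, for `k ≥ 1`,
`T_k = T_{k-1} + (1+t)(-q)^{k²} + (1-t²) ∑_{i=1}^{k-1} (-q)^{k²-i²} T_{i-1}`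
(below the sum is reindexed by `i ↦ i+1`). -/
def T {R : Type*} [CommRing R] (t q : R) : ℕ → R
  | 0 => 1
  | (k+1) => T t q k + (1 + t) * (-q) ^ ((k+1)^2) +
      (1 - t^2) * ∑ i ∈ (Finset.range k).attach,
        (-q) ^ ((k+1)^2 - (i.1+1)^2) * T t q i.1
decreasing_by
  · exact Nat.lt_succ_self k
  · exact Nat.lt_succ_of_lt (Finset.mem_range.mp i.2)

/-- `f n h` with `f 0 0 = 1`, `f 0 h = 0` for `h ≥ 1`, `f n h = 0` for `h < 0`, and
`f n h = (1-q^h) f (n-1) (h-1) + (1-t q^{h+1}) f (n-1) (h+1)`; at `h = 0` the first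
term vanishes since `1 - q^0 = 0`. -/
def f {R : Type*} [CommRing R] (t q : R) : ℕ → ℕ → R
  | 0, h => if h = 0 then 1 else 0
  | (n+1), 0 => (1 - t * q) * f t q n 1
  | (n+1), (h+1) => (1 - q^(h+1)) * f t q n h + (1 - t * q^(h+2)) * f t q n (h+2)

/-- `Ẽ_n(t,q) = f(2n,0)`, which is `(1-q)^{2n}` times the `(t,q)`-Euler number. -/
def Etilde {R : Type*} [CommRing R] (t q : R) (n : ℕ) : R := f t q (2*n) 0

/-- Binomial coefficient with integer lower index, `0` when the lower index is negative. -/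
def binom (n : ℕ) (m : ℤ) : ℤ := if 0 ≤ m then (n.choose m.toNat : ℤ) else 0

/-- q-Pochhammer symbol `(a;q)_n = ∏_{j=0}^{n-1} (1 - a q^j)`. -/
def qPoch {K : Type*} [CommRing K] (a q : K) (n : ℕ) : K :=
  ∏ j ∈ Finset.range n, (1 - a * q ^ j)

/-- Gaussian binomial coefficient `[n choose k]_q = (q;q)_n / ((q;q)_k (q;q)_{n-k})`,
equal to `0` whenever `k < 0` or `k > n`. -/
def gauss {K : Type*} [Field K] (q : K) (n k : ℤ) : K :=
  if 0 ≤ k ∧ k ≤ n then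
    qPoch q q n.toNat / (qPoch q q k.toNat * qPoch q q (n - k).toNat)
  else 0

/-- Number of distinct (positive) part sizes of the partition encoded by an
antitone function `Fin m → Fin (n+1)`. -/
def distCard {m n : ℕ} (g : Fin m → Fin (n+1)) : ℕ :=
  ((Finset.univ.image fun i => ((g i : ℕ))).erase 0).card

/-- `∑_{λ ⊆ B(m,n)} x^{dist(λ)} q^{|λ|}`: partitions in the `m × n` box are encoded
as antitone functions `Fin m → Fin (n+1)`. -/
def boxSum {R : Type*} [CommRing R] (x q : R) (m n : ℕ) : R :=
  ∑ g ∈ Finset.univ.filter (fun g : Fin m → Fin (n+1) => ∀ i j : Fin m, i ≤ j → g j ≤ g i),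
    x ^ distCard g * q ^ (∑ i, (g i : ℕ))

/-- The field `ℚ(t,q)` of rational functions in two indeterminates. -/
abbrev Ktq : Type := FractionRing (MvPolynomial (Fin 2) ℚ)

/-- The indeterminate `t` in `ℚ(t,q)`. -/
noncomputable def tV : Ktq := algebraMap (MvPolynomial (Fin 2) ℚ) Ktq (MvPolynomial.X 0)

/-- The indeterminate `q` in `ℚ(t,q)`. -/
noncomputable def qV : Ktq := algebraMap (MvPolynomial (Fin 2) ℚ) Ktq (MvPolynomial.X 1)


open Finset

lemma algMap_inj : Function.Injective (algebraMap (MvPolynomial (Fin 2) ℚ) Ktq) :=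
  IsFractionRing.injective _ _

lemma qV_ne_zero : qV ≠ 0 := by
  intro h
  have : (MvPolynomial.X 1 : MvPolynomial (Fin 2) ℚ) = 0 := by
    apply algMap_inj; simpa [qV] using h
  exact MvPolynomial.X_ne_zero 1 this

lemma one_sub_qV_pow_ne {m : ℕ} (hm : m ≠ 0) : (1 : Ktq) - qV ^ m ≠ 0 := by
  intro h
  have h2 : (1 - MvPolynomial.X 1 ^ m : MvPolynomial (Fin 2) ℚ) = 0 := by
    apply algMap_inj
    simpa [qV, map_sub, map_pow] using h
  have h3 := congrArg (MvPolynomial.coeff 0) h2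
  simp [MvPolynomial.coeff_X_pow, Finsupp.single_eq_zero, hm] at h3

lemma qPoch_succ {K : Type*} [CommRing K] (a q : K) (n : ℕ) :
    qPoch a q (n+1) = qPoch a q n * (1 - a * q ^ n) := Finset.prod_range_succ _ _

lemma qPoch_zero {K : Type*} [CommRing K] (a q : K) : qPoch a q 0 = 1 := rfl

lemma P_ne (n : ℕ) : qPoch (qV^2) (qV^2) n ≠ 0 := by
  unfold qPoch
  rw [Finset.prod_ne_zero_iff]
  intro j _
  have h : (1:Ktq) - qV^2 * (qV^2)^j = 1 - qV^(2*(j+1)) := by ring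
  rw [h]; exact one_sub_qV_pow_ne (by omega)

lemma one_sub_QQ_ne (j : ℕ) : (1:Ktq) - qV^2 * (qV^2)^j ≠ 0 := by
  have h : (1:Ktq) - qV^2 * (qV^2)^j = 1 - qV^(2*(j+1)) := by ring
  rw [h]; exact one_sub_qV_pow_ne (by omega)

lemma gauss_neg {K : Type*} [Field K] (q : K) (n k : ℤ) (h : k < 0) : gauss q n k = 0 := by
  unfold gauss; rw [if_neg]; rintro ⟨h1, h2⟩; omega

lemma gauss_lt {K : Type*} [Field K] (q : K) (n k : ℤ) (h : n < k) : gauss q n k = 0 := by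
  unfold gauss; rw [if_neg]; rintro ⟨h1, h2⟩; omega

lemma gauss_zero {n : ℤ} (h : 0 ≤ n) : gauss (qV^2) n 0 = 1 := by
  unfold gauss
  rw [if_pos ⟨le_refl 0, h⟩]
  simp [qPoch_zero, div_self (P_ne _)]

lemma gauss_self {n : ℤ} (h : 0 ≤ n) : gauss (qV^2) n n = 1 := by
  unfold gauss
  rw [if_pos ⟨h, le_refl n⟩]
  simp [qPoch_zero, div_self (P_ne _)]

lemma gauss_ofNat (a b : ℕ) (h : b ≤ a) :
    gauss (qV^2) (a:ℤ) (b:ℤ) = qPoch (qV^2) (qV^2) a /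
      (qPoch (qV^2) (qV^2) b * qPoch (qV^2) (qV^2) (a-b)) := by
  unfold gauss
  rw [if_pos ⟨by positivity, by exact_mod_cast h⟩]
  have h1 : ((a:ℤ) - b) = ((a - b : ℕ) : ℤ) := by omega
  rw [h1, Int.toNat_natCast, Int.toNat_natCast, Int.toNat_natCast]

lemma pascal_nat (a b : ℕ) :
    gauss (qV^2) ((a+b+2 : ℕ) : ℤ) ((a+1 : ℕ) : ℤ)
      = gauss (qV^2) ((a+b+1 : ℕ) : ℤ) ((a+1 : ℕ) : ℤ)
        + (qV^2)^(b+1) * gauss (qV^2) ((a+b+1 : ℕ) : ℤ) ((a : ℕ) : ℤ) := by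
  rw [gauss_ofNat _ _ (by omega), gauss_ofNat _ _ (by omega), gauss_ofNat _ _ (by omega)]
  have e1 : a + b + 2 - (a+1) = b + 1 := by omega
  have e2 : a + b + 1 - (a+1) = b := by omega
  have e3 : a + b + 1 - a = b + 1 := by omega
  rw [e1, e2, e3]
  have p1 : qPoch (qV^2) (qV^2) (a+b+2) = qPoch (qV^2) (qV^2) (a+b+1) * (1 - qV^2 * (qV^2)^(a+b+1)) :=
    qPoch_succ _ _ _
  have p2 : qPoch (qV^2) (qV^2) (a+1) = qPoch (qV^2) (qV^2) a * (1 - qV^2 * (qV^2)^a) :=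
    qPoch_succ _ _ _
  have p3 : qPoch (qV^2) (qV^2) (b+1) = qPoch (qV^2) (qV^2) b * (1 - qV^2 * (qV^2)^b) :=
    qPoch_succ _ _ _
  rw [p1, p2, p3]
  field_simp [P_ne, one_sub_QQ_ne]
  ring

lemma pascal (n k : ℤ) (hn : 1 ≤ n) :
    gauss (qV^2) n k = gauss (qV^2) (n-1) k + (qV^2)^(n-k) * gauss (qV^2) (n-1) (k-1) := by
  rcases lt_trichotomy k 0 with hk | hk | hk
  · rw [gauss_neg _ _ _ hk, gauss_neg _ _ _ hk, gauss_neg _ _ _ (by omega)]; ring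
  · subst hk
    rw [gauss_zero (by omega), gauss_zero (by omega), gauss_neg _ _ _ (by omega)]; ring
  · rcases lt_trichotomy n k with h | h | h
    · rw [gauss_lt _ _ _ h, gauss_lt _ _ _ (by omega), gauss_lt _ _ _ (by omega)]; ring
    · subst h
      rw [gauss_self (by omega), gauss_self (by omega), gauss_lt _ _ _ (by omega)]
      simp
    · -- 1 ≤ k ≤ n-1
      obtain ⟨a, rfl⟩ : ∃ a : ℕ, k = (a:ℤ)+1 := ⟨(k-1).toNat, by omega⟩
      obtain ⟨b, hb⟩ : ∃ b : ℕ, n = (a:ℤ)+(b:ℤ)+2 := ⟨(n-a-2).toNat, by omega⟩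
      subst hb
      have c1 : ((a:ℤ)+(b:ℤ)+2) = ((a+b+2 : ℕ) : ℤ) := by push_cast; ring
      have c2 : ((a:ℤ)+1) = ((a+1 : ℕ) : ℤ) := by push_cast; ring
      have c3 : ((a:ℤ)+(b:ℤ)+2) - 1 = ((a+b+1 : ℕ) : ℤ) := by push_cast; ring
      have c4 : ((a:ℤ)+1) - 1 = ((a : ℕ) : ℤ) := by push_cast; ring
      have c5 : ((a:ℤ)+(b:ℤ)+2) - ((a:ℤ)+1) = ((b+1 : ℕ) : ℤ) := by push_cast; ring
      rw [c5, c3, c4, zpow_natCast]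
      rw [show gauss (qV^2) ((a:ℤ)+(b:ℤ)+2) ((a:ℤ)+1)
            = gauss (qV^2) ((a+b+2 : ℕ) : ℤ) ((a+1 : ℕ) : ℤ) by rw [← c1, ← c2]]
      rw [show gauss (qV^2) ((a+b+1 : ℕ) : ℤ) ((a:ℤ)+1)
            = gauss (qV^2) ((a+b+1 : ℕ) : ℤ) ((a+1 : ℕ) : ℤ) by rw [← c2]]
      exact pascal_nat a b

/-- The `k`-dependent part of the summand. -/
noncomputable def Fz (m j i : ℤ) : Ktq :=
  gauss (qV^2) (m - j) i *
    (gauss (qV^2) (m - i) (j - i) + tV * gauss (qV^2) (m - i - 1) (j - i - 1))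

lemma Fz_zero_of_lt {j i : ℤ} (m : ℤ) (h : j < i) : Fz m j i = 0 := by
  unfold Fz
  rw [gauss_neg _ (m-i) (j-i) (by omega), gauss_neg _ (m-i-1) (j-i-1) (by omega)]
  ring

lemma Fz_zero_of_big {m j : ℤ} (i : ℤ) (h : m < j) (hi : 0 ≤ i) : Fz m j i = 0 := by
  unfold Fz
  rw [gauss_lt _ (m-j) i (by omega)]
  ring

lemma Fz_zero_of_neg {j : ℤ} (m : ℤ) {i : ℤ} (hi : i < 0) : Fz m j i = 0 := by
  unfold Fz
  rw [gauss_neg _ (m-j) i hi]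
  ring

lemma gauss_self' {n m : ℤ} (h : m = n) (h0 : 0 ≤ n) : gauss (qV^2) n m = 1 := by
  subst h; exact gauss_self h0

lemma keyF (k : ℕ) (j i : ℤ) (h0j : 0 ≤ j) (h0i : 0 ≤ i) (hj : j ≤ (k:ℤ)+2) (hi : i ≤ (k:ℤ)+2) :
    Fz ((k:ℤ)+2) j i = Fz ((k:ℤ)+1) j i + (qV^2)^((k:ℤ)+2-j) * Fz ((k:ℤ)+1) (j-1) i
      + (qV^2)^((k:ℤ)+2-j-i) * Fz (k:ℤ) (j-1) (i-1) := by
  rcases lt_or_ge j i with hlt | hij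
  · rw [Fz_zero_of_lt _ hlt, Fz_zero_of_lt _ hlt, Fz_zero_of_lt _ (by omega),
      Fz_zero_of_lt _ (by omega)]
    ring
  rcases eq_or_lt_of_le hj with hj2 | hj2
  · -- j = k+2
    subst hj2
    rw [show Fz ((k:ℤ)+1) ((k:ℤ)+2) i = 0 from Fz_zero_of_big i (by omega) h0i]
    rw [show Fz (k:ℤ) ((k:ℤ)+2-1) (i-1) = 0 from by
      rcases eq_or_lt_of_le h0i with h0 | h0
      · exact Fz_zero_of_neg _ (by omega)
      · exact Fz_zero_of_big (i-1) (by omega) (by omega)]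
    rw [show (k:ℤ)+2-((k:ℤ)+2) = 0 from by ring, zpow_zero, one_mul, mul_zero, add_zero,
      zero_add]
    rcases eq_or_lt_of_le h0i with h0 | h0
    · subst h0
      unfold Fz
      rw [gauss_self' (show ((k:ℤ)+2-1-0) = ((k:ℤ)+1-0) from by ring) (by omega),
        gauss_self' (show ((k:ℤ)+2-1-0-1) = ((k:ℤ)+1-0-1) from by ring) (by omega),
        gauss_self' (show ((k:ℤ)+2-0) = ((k:ℤ)+2-0) from rfl) (by omega),
        gauss_self' (show ((k:ℤ)+2-0-1) = ((k:ℤ)+2-0-1) from rfl) (by omega),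
        gauss_zero (show (0:ℤ) ≤ (k:ℤ)+2-((k:ℤ)+2) from by omega),
        gauss_zero (show (0:ℤ) ≤ (k:ℤ)+1-((k:ℤ)+2-1) from by omega)]
    · unfold Fz
      rw [gauss_lt _ ((k:ℤ)+2-((k:ℤ)+2)) i (by omega),
        gauss_lt _ ((k:ℤ)+1-((k:ℤ)+2-1)) i (by omega)]
      ring
  rcases eq_or_lt_of_le (show i ≤ (k:ℤ)+1 from by omega) with hik | hik
  · -- i = k+1 and then j = k+1
    have hj3 : j = (k:ℤ)+1 := by omega
    have hi3 : i = (k:ℤ)+1 := by omega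
    subst hj3
    subst hi3
    rw [show Fz ((k:ℤ)+1) ((k:ℤ)+1-1) ((k:ℤ)+1) = 0 from Fz_zero_of_lt _ (by omega)]
    rcases Nat.eq_zero_or_pos k with hk0 | hk0
    · subst hk0
      have c0 : ((0:ℕ):ℤ) = 0 := by norm_num
      rw [c0]
      norm_num
      rw [show Fz 1 1 1 = 0 from by
        unfold Fz; rw [gauss_lt _ (1-1) 1 (by omega)]; ring]
      unfold Fz
      norm_num
      rw [gauss_self' (show (1:ℤ) = 1 from rfl) (by omega),
        gauss_zero (show (0:ℤ) ≤ 1 from by omega),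
        gauss_zero (show (0:ℤ) ≤ (0:ℤ) from le_refl 0),
        gauss_neg _ (0:ℤ) (-1) (by omega),
        gauss_neg _ (-1:ℤ) (-1) (by omega)]
    · rw [show Fz ((k:ℤ)+2) ((k:ℤ)+1) ((k:ℤ)+1) = 0 from by
          unfold Fz; rw [gauss_lt _ ((k:ℤ)+2-((k:ℤ)+1)) ((k:ℤ)+1) (by omega)]; ring,
        show Fz ((k:ℤ)+1) ((k:ℤ)+1) ((k:ℤ)+1) = 0 from by
          unfold Fz; rw [gauss_lt _ ((k:ℤ)+1-((k:ℤ)+1)) ((k:ℤ)+1) (by omega)]; ring,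
        show Fz (k:ℤ) ((k:ℤ)+1-1) ((k:ℤ)+1-1) = 0 from by
          unfold Fz; rw [gauss_lt _ ((k:ℤ)-((k:ℤ)+1-1)) ((k:ℤ)+1-1) (by omega)]; ring]
      ring
  · -- main case: i ≤ j ≤ k+1, i ≤ k
    unfold Fz
    rw [show (k:ℤ)+1-(j-1) = (k:ℤ)+2-j from by ring,
      show (k:ℤ)+1-i = (k:ℤ)+2-i-1 from by ring,
      show j-1-i = j-i-1 from by ring]
    rw [pascal ((k:ℤ)+2-j) i (by omega), pascal ((k:ℤ)+2-i) (j-i) (by omega),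
      pascal ((k:ℤ)+2-i-1) (j-i-1) (by omega)]
    ring_nf

/-- The `k`-independent coefficient of the summand. -/
noncomputable def cz (j i : ℕ) : Ktq := (-1 : Ktq)^(j+i) * tV^(2*i) * qV^(j^2+i^2+i)

/-- The right-hand side of the target identity. -/
noncomputable def Sm (k : ℕ) : Ktq :=
  ∑ j ∈ Finset.range (k+1), ∑ i ∈ Finset.range (j+1),
      (-1 : Ktq)^(j+i) * tV^(2*i) * qV^(j^2+i^2+i) *
        gauss (qV^2) ((k:ℤ) - j) (i:ℤ) *
        (gauss (qV^2) ((k:ℤ) - i) ((j:ℤ) - i)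
          + tV * gauss (qV^2) ((k:ℤ) - i - 1) ((j:ℤ) - i - 1))

lemma summand_eq (k j i : ℕ) :
    (-1 : Ktq)^(j+i) * tV^(2*i) * qV^(j^2+i^2+i) *
        gauss (qV^2) ((k:ℤ) - j) (i:ℤ) *
        (gauss (qV^2) ((k:ℤ) - i) ((j:ℤ) - i)
          + tV * gauss (qV^2) ((k:ℤ) - i - 1) ((j:ℤ) - i - 1))
      = cz j i * Fz (k:ℤ) (j:ℤ) (i:ℤ) := by
  unfold cz Fz; ring

lemma Sm_rect (k N : ℕ) (h : k < N) :
    Sm k = ∑ j ∈ Finset.range N, ∑ i ∈ Finset.range N, cz j i * Fz (k:ℤ) (j:ℤ) (i:ℤ) := by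
  unfold Sm
  have h1 : ∀ j ∈ Finset.range (k+1),
      (∑ i ∈ Finset.range (j+1),
        (-1 : Ktq)^(j+i) * tV^(2*i) * qV^(j^2+i^2+i) *
          gauss (qV^2) ((k:ℤ) - j) (i:ℤ) *
          (gauss (qV^2) ((k:ℤ) - i) ((j:ℤ) - i)
            + tV * gauss (qV^2) ((k:ℤ) - i - 1) ((j:ℤ) - i - 1)))
      = ∑ i ∈ Finset.range N, cz j i * Fz (k:ℤ) (j:ℤ) (i:ℤ) := by
    intro j hj
    rw [Finset.sum_congr rfl (fun i _ => summand_eq k j i)]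
    apply Finset.sum_subset (Finset.range_subset_range.mpr (by
      simp only [Finset.mem_range] at hj; omega))
    intro i _ hi
    simp only [Finset.mem_range] at hi
    rw [Fz_zero_of_lt _ (by omega : (j:ℤ) < (i:ℤ)), mul_zero]
  rw [Finset.sum_congr rfl h1]
  apply Finset.sum_subset (Finset.range_subset_range.mpr (by omega))
  intro j _ hj
  simp only [Finset.mem_range] at hj
  apply Finset.sum_eq_zero
  intro i _
  rw [Fz_zero_of_big (i:ℤ) (by omega : (k:ℤ) < (j:ℤ)) (by omega), mul_zero]

lemma shift1 (k j i : ℕ) (hj : j ≤ k+1) :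
    cz (j+1) i * ((qV^2)^((k:ℤ)+2-((j+1:ℕ):ℤ)) * Fz ((k:ℤ)+1) (((j+1:ℕ):ℤ)-1) (i:ℤ))
      = -(qV^(2*k+3)) * (cz j i * Fz ((k:ℤ)+1) (j:ℤ) (i:ℤ)) := by
  rw [show ((j+1:ℕ):ℤ)-1 = (j:ℤ) from by push_cast; ring]
  have hc : cz (j+1) i = -(qV^(2*j+1)) * cz j i := by
    unfold cz
    rw [show j+1+i = (j+i)+1 from by omega, pow_succ,
      show (j+1)^2+i^2+i = (2*j+1)+(j^2+i^2+i) from by ring, pow_add]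
    ring
  have hq : (qV^2)^((k:ℤ)+2-((j+1:ℕ):ℤ)) * qV^(2*j+1) = qV^(2*k+3) := by
    rw [show (k:ℤ)+2-((j+1:ℕ):ℤ) = ((k+1-j : ℕ):ℤ) from by omega, zpow_natCast,
      ← pow_mul, ← pow_add, show 2*(k+1-j)+(2*j+1) = 2*k+3 from by omega]
  rw [hc]
  linear_combination (-(cz j i * Fz ((k:ℤ)+1) (j:ℤ) (i:ℤ))) * hq

lemma shift2 (k j i : ℕ) :
    cz (j+1) (i+1) * ((qV^2)^((k:ℤ)+2-((j+1:ℕ):ℤ)-((i+1:ℕ):ℤ)) *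
        Fz (k:ℤ) (((j+1:ℕ):ℤ)-1) (((i+1:ℕ):ℤ)-1))
      = tV^2 * qV^(2*k+3) * (cz j i * Fz (k:ℤ) (j:ℤ) (i:ℤ)) := by
  rw [show ((j+1:ℕ):ℤ)-1 = (j:ℤ) from by push_cast; ring,
    show ((i+1:ℕ):ℤ)-1 = (i:ℤ) from by push_cast; ring]
  have hc : cz (j+1) (i+1) = tV^2 * qV^(2*j+2*i+3) * cz j i := by
    unfold cz
    rw [show j+1+(i+1) = (j+i)+2 from by omega, pow_add,
      show 2*(i+1) = 2+2*i from by omega, pow_add,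
      show (j+1)^2+(i+1)^2+(i+1) = (2*j+2*i+3)+(j^2+i^2+i) from by ring, pow_add]
    ring
  have hq : (qV^2)^((k:ℤ)+2-((j+1:ℕ):ℤ)-((i+1:ℕ):ℤ)) * qV^(2*j+2*i+3) = qV^(2*k+3) := by
    rw [← zpow_natCast qV 2, ← zpow_mul, ← zpow_natCast qV (2*j+2*i+3),
      ← zpow_add₀ qV_ne_zero,
      show (2:ℕ)*((k:ℤ)+2-((j+1:ℕ):ℤ)-((i+1:ℕ):ℤ)) + ((2*j+2*i+3:ℕ):ℤ) = ((2*k+3:ℕ):ℤ)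
        from by push_cast; ring,
      zpow_natCast]
  rw [hc]
  linear_combination (tV^2 * cz j i * Fz (k:ℤ) (j:ℤ) (i:ℤ)) * hq

lemma sumB (k : ℕ) :
    (∑ j ∈ Finset.range (k+3), ∑ i ∈ Finset.range (k+3),
        cz j i * ((qV^2)^((k:ℤ)+2-(j:ℤ)) * Fz ((k:ℤ)+1) ((j:ℤ)-1) (i:ℤ)))
      = -(qV^(2*k+3)) * ∑ j ∈ Finset.range (k+3), ∑ i ∈ Finset.range (k+3),
          cz j i * Fz ((k:ℤ)+1) (j:ℤ) (i:ℤ) := by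
  rw [Finset.sum_range_succ' (fun j => ∑ i ∈ Finset.range (k+3),
    cz j i * ((qV^2)^((k:ℤ)+2-(j:ℤ)) * Fz ((k:ℤ)+1) ((j:ℤ)-1) (i:ℤ))) (k+2)]
  have h0 : (∑ i ∈ Finset.range (k+3),
      cz 0 i * ((qV^2)^((k:ℤ)+2-((0:ℕ):ℤ)) * Fz ((k:ℤ)+1) (((0:ℕ):ℤ)-1) (i:ℤ))) = 0 :=
    Finset.sum_eq_zero (fun i _ => by
      rw [Fz_zero_of_lt _ (by omega : ((0:ℕ):ℤ)-1 < (i:ℤ)), mul_zero, mul_zero])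
  rw [h0, add_zero]
  rw [Finset.sum_congr rfl (fun j hj => Finset.sum_congr rfl (fun i _ =>
    shift1 k j i (by simp only [Finset.mem_range] at hj; omega)))]
  have h1 : ∑ j ∈ Finset.range (k+3), ∑ i ∈ Finset.range (k+3),
        -(qV^(2*k+3)) * (cz j i * Fz ((k:ℤ)+1) (j:ℤ) (i:ℤ))
      = ∑ j ∈ Finset.range (k+2), ∑ i ∈ Finset.range (k+3),
        -(qV^(2*k+3)) * (cz j i * Fz ((k:ℤ)+1) (j:ℤ) (i:ℤ)) := by
    rw [Finset.sum_range_succ]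
    have hz : (∑ i ∈ Finset.range (k+3),
        -(qV^(2*k+3)) * (cz (k+2) i * Fz ((k:ℤ)+1) ((k+2:ℕ):ℤ) (i:ℤ))) = 0 :=
      Finset.sum_eq_zero (fun i _ => by
        rw [Fz_zero_of_big (i:ℤ) (by omega : (k:ℤ)+1 < ((k+2:ℕ):ℤ)) (by omega),
          mul_zero, mul_zero])
    rw [hz, add_zero]
  rw [← h1]
  simp only [← Finset.mul_sum]

lemma sumC (k : ℕ) :
    (∑ j ∈ Finset.range (k+3), ∑ i ∈ Finset.range (k+3),
        cz j i * ((qV^2)^((k:ℤ)+2-(j:ℤ)-(i:ℤ)) * Fz (k:ℤ) ((j:ℤ)-1) ((i:ℤ)-1)))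
      = tV^2 * qV^(2*k+3) * ∑ j ∈ Finset.range (k+3), ∑ i ∈ Finset.range (k+3),
          cz j i * Fz (k:ℤ) (j:ℤ) (i:ℤ) := by
  rw [Finset.sum_range_succ' (fun j => ∑ i ∈ Finset.range (k+3),
    cz j i * ((qV^2)^((k:ℤ)+2-(j:ℤ)-(i:ℤ)) * Fz (k:ℤ) ((j:ℤ)-1) ((i:ℤ)-1))) (k+2)]
  have h0 : (∑ i ∈ Finset.range (k+3),
      cz 0 i * ((qV^2)^((k:ℤ)+2-((0:ℕ):ℤ)-(i:ℤ)) * Fz (k:ℤ) (((0:ℕ):ℤ)-1) ((i:ℤ)-1))) = 0 :=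
    Finset.sum_eq_zero (fun i _ => by
      rcases Nat.eq_zero_or_pos i with hi | hi
      · subst hi
        rw [Fz_zero_of_neg _ (by omega : ((0:ℕ):ℤ)-1 < 0), mul_zero, mul_zero]
      · rw [Fz_zero_of_lt _ (by omega : ((0:ℕ):ℤ)-1 < (i:ℤ)-1), mul_zero, mul_zero])
  rw [h0, add_zero]
  have h1 : ∀ j ∈ Finset.range (k+2),
      (∑ i ∈ Finset.range (k+3),
        cz (j+1) i * ((qV^2)^((k:ℤ)+2-((j+1:ℕ):ℤ)-(i:ℤ)) * Fz (k:ℤ) (((j+1:ℕ):ℤ)-1) ((i:ℤ)-1)))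
      = ∑ i ∈ Finset.range (k+2),
          tV^2 * qV^(2*k+3) * (cz j i * Fz (k:ℤ) (j:ℤ) (i:ℤ)) := by
    intro j _
    rw [Finset.sum_range_succ' (fun i =>
      cz (j+1) i * ((qV^2)^((k:ℤ)+2-((j+1:ℕ):ℤ)-(i:ℤ)) * Fz (k:ℤ) (((j+1:ℕ):ℤ)-1) ((i:ℤ)-1))) (k+2)]
    rw [show cz (j+1) 0 * ((qV^2)^((k:ℤ)+2-((j+1:ℕ):ℤ)-((0:ℕ):ℤ)) *
          Fz (k:ℤ) (((j+1:ℕ):ℤ)-1) (((0:ℕ):ℤ)-1)) = 0 from by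
      rw [Fz_zero_of_neg _ (by omega : ((0:ℕ):ℤ)-1 < 0), mul_zero, mul_zero], add_zero]
    exact Finset.sum_congr rfl (fun i _ => shift2 k j i)
  rw [Finset.sum_congr rfl h1]
  have h2 : ∑ j ∈ Finset.range (k+3), ∑ i ∈ Finset.range (k+3),
        tV^2 * qV^(2*k+3) * (cz j i * Fz (k:ℤ) (j:ℤ) (i:ℤ))
      = ∑ j ∈ Finset.range (k+2), ∑ i ∈ Finset.range (k+2),
        tV^2 * qV^(2*k+3) * (cz j i * Fz (k:ℤ) (j:ℤ) (i:ℤ)) := by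
    rw [Finset.sum_range_succ]
    have hz : (∑ i ∈ Finset.range (k+3),
        tV^2 * qV^(2*k+3) * (cz (k+2) i * Fz (k:ℤ) ((k+2:ℕ):ℤ) (i:ℤ))) = 0 :=
      Finset.sum_eq_zero (fun i _ => by
        rw [Fz_zero_of_big (i:ℤ) (by omega : (k:ℤ) < ((k+2:ℕ):ℤ)) (by omega),
          mul_zero, mul_zero])
    rw [hz, add_zero]
    refine Finset.sum_congr rfl (fun j hj => ?_)
    simp only [Finset.mem_range] at hj
    rw [Finset.sum_range_succ]
    rw [show cz j (k+2) * Fz (k:ℤ) (j:ℤ) ((k+2:ℕ):ℤ) = 0 from by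
      rw [Fz_zero_of_lt _ (by omega : (j:ℤ) < ((k+2:ℕ):ℤ)), mul_zero], mul_zero, add_zero]
  rw [← h2]
  simp only [← Finset.mul_sum]

lemma Sm_rec (k : ℕ) :
    Sm (k+2) = (1 - qV^(2*k+3)) * Sm (k+1) + tV^2 * qV^(2*k+3) * Sm k := by
  rw [Sm_rect (k+2) (k+3) (by omega), Sm_rect (k+1) (k+3) (by omega),
    Sm_rect k (k+3) (by omega)]
  have hkey : ∀ j ∈ Finset.range (k+3), (∑ i ∈ Finset.range (k+3),
        cz j i * Fz ((k+2:ℕ):ℤ) (j:ℤ) (i:ℤ))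
      = (∑ i ∈ Finset.range (k+3), cz j i * Fz ((k:ℤ)+1) (j:ℤ) (i:ℤ))
        + ((∑ i ∈ Finset.range (k+3),
            cz j i * ((qV^2)^((k:ℤ)+2-(j:ℤ)) * Fz ((k:ℤ)+1) ((j:ℤ)-1) (i:ℤ)))
          + (∑ i ∈ Finset.range (k+3),
            cz j i * ((qV^2)^((k:ℤ)+2-(j:ℤ)-(i:ℤ)) * Fz (k:ℤ) ((j:ℤ)-1) ((i:ℤ)-1)))) := by
    intro j hj
    simp only [Finset.mem_range] at hj
    rw [← Finset.sum_add_distrib, ← Finset.sum_add_distrib]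
    refine Finset.sum_congr rfl (fun i hi => ?_)
    simp only [Finset.mem_range] at hi
    have hk := keyF k (j:ℤ) (i:ℤ) (by omega) (by omega) (by omega) (by omega)
    rw [show ((k+2:ℕ):ℤ) = (k:ℤ)+2 from by push_cast; ring, hk]
    ring
  rw [Finset.sum_congr rfl hkey, Finset.sum_add_distrib, Finset.sum_add_distrib]
  rw [sumB k, sumC k]
  have hc : ((k+1:ℕ):ℤ) = (k:ℤ)+1 := by push_cast; ring
  simp only [hc]
  ring

lemma T_succ {R : Type*} [CommRing R] (t q : R) (k : ℕ) :
    T t q (k+1) = T t q k + (1 + t) * (-q) ^ ((k+1)^2) +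
      (1 - t^2) * ∑ i ∈ Finset.range k, (-q) ^ ((k+1)^2 - (i+1)^2) * T t q i := by
  rw [T, Finset.sum_attach (Finset.range k) (fun i => (-q) ^ ((k+1)^2 - (i+1)^2) * T t q i)]

lemma T_rec (k : ℕ) :
    T tV qV (k+2) = (1 - qV^(2*k+3)) * T tV qV (k+1) + tV^2 * qV^(2*k+3) * T tV qV k := by
  have h2 := T_succ tV qV (k+1)
  have h1 := T_succ tV qV k
  rw [h2, h1]
  have hS : ∑ i ∈ Finset.range (k+1), (-qV)^((k+1+1)^2-(i+1)^2) * T tV qV i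
      = (-qV)^(2*k+3) * (∑ i ∈ Finset.range k, (-qV)^((k+1)^2-(i+1)^2) * T tV qV i)
        + (-qV)^(2*k+3) * T tV qV k := by
    rw [Finset.sum_range_succ, Finset.mul_sum]
    congr 1
    · refine Finset.sum_congr rfl (fun i hi => ?_)
      simp only [Finset.mem_range] at hi
      have hle : (i+1)^2 ≤ (k+1)^2 := Nat.pow_le_pow_left (by omega) 2
      have h3 : (k+1+1)^2 = (2*k+3) + (k+1)^2 := by ring
      have he : (k+1+1)^2-(i+1)^2 = (2*k+3) + ((k+1)^2-(i+1)^2) := by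
        rw [h3]
        generalize (i+1)^2 = a at hle ⊢
        generalize (k+1)^2 = b at hle ⊢
        omega
      rw [he, pow_add, mul_assoc]
    · have h3 : (k+1+1)^2 = (2*k+3) + (k+1)^2 := by ring
      rw [show (k+1+1)^2-(k+1)^2 = 2*k+3 from by rw [h3]; omega]
  rw [hS]
  have hodd : (-qV)^(2*k+3) = -(qV^(2*k+3)) := Odd.neg_pow ⟨k+1, by omega⟩ qV
  have hsq : (-qV)^((k+1+1)^2) = (-qV)^(2*k+3) * (-qV)^((k+1)^2) := by
    rw [← pow_add]
    congr 1
    ring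
  rw [hsq, hodd]
  ring

lemma T_zero : T tV qV 0 = 1 := by rw [T]

lemma T_one : T tV qV 1 = 1 - qV - tV * qV := by
  rw [show (1:ℕ) = 0+1 from rfl, T_succ, T_zero]
  simp
  ring

lemma Sm_zero : Sm 0 = 1 := by
  unfold Sm
  rw [Finset.sum_range_one, Finset.sum_range_one]
  norm_num
  rw [gauss_zero (le_refl 0), gauss_neg _ (-1:ℤ) (-1) (by omega)]
  ring

lemma Sm_one : Sm 1 = 1 - qV - tV * qV := by
  unfold Sm
  norm_num [Finset.sum_range_succ, Finset.sum_range_zero]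
  rw [gauss_zero (show (0:ℤ) ≤ 1 from by omega), gauss_zero (le_refl 0),
    gauss_neg _ (0:ℤ) (-1) (by omega), gauss_neg _ (-1:ℤ) (-1) (by omega),
    gauss_self (show (0:ℤ) ≤ 1 from by omega), gauss_lt _ (0:ℤ) 1 (by omega)]
  ring

lemma T_eq_Sm (n : ℕ) : T tV qV n = Sm n := by
  have key : ∀ n : ℕ, T tV qV n = Sm n ∧ T tV qV (n+1) = Sm (n+1) := by
    intro n
    induction n with
    | zero =>
      refine ⟨by rw [T_zero, Sm_zero], ?_⟩
      rw [T_one, Sm_one]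
    | succ n ih =>
      refine ⟨ih.2, ?_⟩
      rw [show n+1+1 = n+2 from rfl, T_rec n, Sm_rec n, ih.1, ih.2]
  exact (key n).1

theorem stmt_1 (k : ℕ) :
    T tV qV k = ∑ j ∈ Finset.range (k+1), ∑ i ∈ Finset.range (j+1),
      (-1 : Ktq)^(j+i) * tV^(2*i) * qV^(j^2+i^2+i) *
        gauss (qV^2) ((k:ℤ) - j) (i:ℤ) *
        (gauss (qV^2) ((k:ℤ) - i) ((j:ℤ) - i)
          + tV * gauss (qV^2) ((k:ℤ) - i - 1) ((j:ℤ) - i - 1)) := by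
  have h := T_eq_Sm k
  unfold Sm at h
  exact h
end

section
/- Let t, q be elements of a commutative ring. For every integer k ≥ 0: T_k(t,q) = Σ_{j=0}^{k} (−q)^{j^2} · ( Σ_{λ ⊆ B(j, k−j)} q^{2|λ|} · (1−t^2)^{dist(λ)} + t · Σ_{λ ⊆ B(j−1, k−j)} q^{2|λ|} · (1−t^2)^{dist(λ)} ), where for j = 0 the second inner sum is taken to be 0. -/
namespace Stmt9Aux

def fwdMap {m n r : ℕ} (g : Fin m → Fin (n+2)) (i : Fin (m - r)) : Fin (n+1) :=
  ⟨min n (g ⟨r + i.1, by have := i.2; omega⟩).1, by omega⟩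

def bwdMap {m n r : ℕ} (h : Fin (m - r) → Fin (n+1)) (i : Fin m) : Fin (n+2) :=
  if _ : i.1 < r then Fin.last (n+1) else (h ⟨i.1 - r, by have := i.2; omega⟩).castSucc

lemma top_iff {m n r : ℕ} (g : Fin m → Fin (n+2))
    (hg : ∀ i j : Fin m, i ≤ j → g j ≤ g i)
    (hr : (Finset.univ.filter (fun i => g i = Fin.last (n+1))).card = r)
    (i : Fin m) : g i = Fin.last (n+1) ↔ i.1 < r := by
  constructor
  · intro hi
    have hsub : Finset.Iic i ⊆ Finset.univ.filter (fun j => g j = Fin.last (n+1)) := by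
      intro j hj
      rw [Finset.mem_Iic] at hj
      rw [Finset.mem_filter]
      exact ⟨Finset.mem_univ _, le_antisymm (Fin.le_last _) (hi ▸ hg j i hj)⟩
    have := Finset.card_le_card hsub
    rw [Fin.card_Iic, hr] at this
    omega
  · intro hi
    by_contra hne
    have hsub : Finset.univ.filter (fun j => g j = Fin.last (n+1)) ⊆ Finset.Iio i := by
      intro j hj
      rw [Finset.mem_filter] at hj
      rw [Finset.mem_Iio]
      by_contra hlt
      push_neg at hlt
      exact hne (le_antisymm (Fin.le_last _) (hj.2 ▸ hg i j hlt))
    have := Finset.card_le_card hsub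
    rw [Fin.card_Iio, hr] at this
    omega

lemma val_congr {m n : ℕ} (g : Fin m → Fin n) {i j : Fin m} (h : i.1 = j.1) :
    ((g i : ℕ)) = ((g j : ℕ)) := congrArg (fun z => ((g z : ℕ))) (Fin.ext h)

lemma card_filter_lt (m r : ℕ) (hr : r ≤ m) :
    (Finset.univ.filter (fun i : Fin m => i.1 < r)).card = r := by
  have : (Finset.univ.filter (fun i : Fin m => i.1 < r))
      = (Finset.range r).attachFin (fun a ha => lt_of_lt_of_le (Finset.mem_range.mp ha) hr) := by
    ext i
    simp [Finset.mem_attachFin]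
  rw [this, Finset.card_attachFin, Finset.card_range]

end Stmt9Aux

namespace Stmt9Aux

lemma fiber_sum {R : Type*} [CommRing R] (x q : R) (m n r : ℕ) (hr : r ≤ m) :
    ∑ g ∈ (Finset.univ.filter
        (fun g : Fin m → Fin (n+2) => ∀ i j : Fin m, i ≤ j → g j ≤ g i)).filter
        (fun g => (Finset.univ.filter (fun i => g i = Fin.last (n+1))).card = r),
      x ^ distCard g * q ^ (∑ i, (g i : ℕ))
    = (if r = 0 then 1 else x * q ^ ((n+1)*r)) * boxSum x q (m - r) n := by
  rw [boxSum, Finset.mul_sum]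
  refine Finset.sum_nbij' (fun g => fwdMap (r := r) g) (fun h => bwdMap (r := r) h)
    ?_ ?_ ?_ ?_ ?_
  · -- maps to
    intro g hgmem
    simp only [Finset.mem_filter, Finset.mem_univ, true_and] at hgmem ⊢
    obtain ⟨hg, hcnt⟩ := hgmem
    intro i j hij
    have h1 : (⟨r + i.1, by have := i.2; omega⟩ : Fin m) ≤ ⟨r + j.1, by have := j.2; omega⟩ := by
      simp only [Fin.mk_le_mk]
      have := hij
      omega
    have := hg _ _ h1
    rw [Fin.le_def] at this ⊢
    simp only [fwdMap]
    omega
  · -- reverse maps to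
    intro h hmem
    simp only [Finset.mem_filter, Finset.mem_univ, true_and] at hmem ⊢
    constructor
    · intro i j hij
      rw [Fin.le_def] at hij
      simp only [bwdMap]
      by_cases hj : j.1 < r
      · rw [dif_pos hj, dif_pos (by omega)]
      · rw [dif_neg hj]
        by_cases hi : i.1 < r
        · rw [dif_pos hi]; exact Fin.le_last _
        · rw [dif_neg hi]
          rw [Fin.castSucc_le_castSucc_iff]
          apply hmem
          simp only [Fin.mk_le_mk]
          omega
    · have heq : ∀ i : Fin m, bwdMap (r := r) h i = Fin.last (n+1) ↔ i.1 < r := by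
        intro i
        simp only [bwdMap]
        by_cases hi : i.1 < r
        · rw [dif_pos hi]; simp [hi]
        · rw [dif_neg hi]
          simp only [hi, iff_false]
          intro hcontra
          have := congrArg Fin.val hcontra
          simp only [Fin.coe_castSucc, Fin.val_last] at this
          have := (h ⟨i.1 - r, by have := i.2; omega⟩).2
          omega
      rw [Finset.filter_congr (fun i _ => by rw [heq i]), card_filter_lt m r hr]
  · -- left inverse
    intro g hgmem
    simp only [Finset.mem_filter, Finset.mem_univ, true_and] at hgmem
    obtain ⟨hg, hcnt⟩ := hgmem
    have hkey := top_iff g hg hcnt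
    have hval : ∀ j : Fin m, ¬ j.1 < r → (g j).1 ≤ n := by
      intro j hj
      have h1 : ¬ g j = Fin.last (n+1) := by rw [hkey]; exact hj
      have h2 := (g j).2
      rw [Fin.ext_iff, Fin.val_last] at h1
      omega
    funext i
    simp only [bwdMap]
    by_cases hi : i.1 < r
    · rw [dif_pos hi]
      exact ((hkey i).mpr hi).symm
    · rw [dif_neg hi]
      apply Fin.ext
      simp only [Fin.coe_castSucc, fwdMap]
      have he : (⟨r + (i.1 - r), by have := i.2; omega⟩ : Fin m) = i := by
        apply Fin.ext
        simp only []
        omega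
      rw [he]
      exact min_eq_right (hval i hi)
  · -- right inverse
    intro h hmem
    funext j
    apply Fin.ext
    simp only [fwdMap, bwdMap]
    rw [dif_neg (by omega : ¬ r + j.1 < r)]
    simp only [Fin.coe_castSucc]
    have he : (⟨r + j.1 - r, by have := j.2; omega⟩ : Fin (m - r)) = j := by
      apply Fin.ext
      simp only []
      omega
    rw [he]
    exact min_eq_right (by have := (h j).2; omega)
  · -- values
    intro g hgmem
    simp only [Finset.mem_filter, Finset.mem_univ, true_and] at hgmem
    obtain ⟨hg, hcnt⟩ := hgmem
    have hkey := top_iff g hg hcnt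
    have hval : ∀ j : Fin m, ¬ j.1 < r → (g j).1 ≤ n := by
      intro j hj
      have h1 : ¬ g j = Fin.last (n+1) := by rw [hkey]; exact hj
      have h2 := (g j).2
      rw [Fin.ext_iff, Fin.val_last] at h1
      omega
    have hfwd : ∀ j : Fin (m - r), (fwdMap (r := r) g j).1
        = (g ⟨r + j.1, by have := j.2; omega⟩).1 := by
      intro j
      simp only [fwdMap]
      exact min_eq_right (hval _ (by simp))
    -- sum decomposition
    have hsum : (∑ i, ((g i).1)) = (n+1)*r + ∑ j, ((fwdMap (r := r) g j).1) := by
      rw [← Finset.sum_filter_add_sum_filter_not Finset.univ (fun i : Fin m => i.1 < r)]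
      congr 1
      · have hc : ∀ i ∈ Finset.univ.filter (fun i : Fin m => i.1 < r), ((g i : ℕ)) = n+1 := by
          intro i hi
          simp only [Finset.mem_filter, Finset.mem_univ, true_and] at hi
          have := (hkey i).mpr hi
          rw [this, Fin.val_last]
        rw [Finset.sum_congr rfl hc, Finset.sum_const, card_filter_lt m r hr,
          smul_eq_mul, mul_comm]
      · refine Finset.sum_bij' (fun (i : Fin m) (hi : i ∈ Finset.univ.filter
            (fun i : Fin m => ¬ i.1 < r)) =>
            (⟨i.1 - r, by simp only [Finset.mem_filter] at hi; have := i.2; omega⟩ : Fin (m - r)))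
          (fun (j : Fin (m - r)) (_ : j ∈ Finset.univ) =>
            (⟨r + j.1, by have := j.2; omega⟩ : Fin m)) ?_ ?_ ?_ ?_ ?_
        · intro a ha; exact Finset.mem_univ _
        · intro b hb
          simp only [Finset.mem_filter, Finset.mem_univ, true_and]
          omega
        · intro a ha
          simp only [Finset.mem_filter, Finset.mem_univ, true_and] at ha
          apply Fin.ext; simp only []; omega
        · intro b hb
          apply Fin.ext; simp only []; omega
        · intro a ha
          simp only [Finset.mem_filter, Finset.mem_univ, true_and] at ha
          rw [hfwd]
          exact val_congr g (by show (a.1 : ℕ) = r + (a.1 - r); omega)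
    -- distCard decomposition
    have himg : ∀ a : ℕ, a ∈ Finset.univ.image (fun i : Fin m => ((g i).1))
        ↔ ((a = n+1 ∧ r ≠ 0)
            ∨ a ∈ Finset.univ.image (fun j : Fin (m - r) => ((fwdMap (r := r) g j).1))) := by
      intro a
      simp only [Finset.mem_image, Finset.mem_univ, true_and]
      constructor
      · rintro ⟨i, rfl⟩
        by_cases hi : i.1 < r
        · left
          have := (hkey i).mpr hi
          rw [this, Fin.val_last]
          exact ⟨rfl, by omega⟩
        · right
          refine ⟨⟨i.1 - r, by have := i.2; omega⟩, ?_⟩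
          rw [hfwd]
          congr 2
          apply Fin.ext; simp only []; omega
      · rintro (⟨rfl, hr0⟩ | ⟨j, rfl⟩)
        · refine ⟨⟨0, by omega⟩, ?_⟩
          have := (hkey ⟨0, by omega⟩).mpr (by simp; omega)
          rw [this, Fin.val_last]
        · exact ⟨⟨r + j.1, by have := j.2; omega⟩, (hfwd j).symm⟩
    by_cases hr0 : r = 0
    · subst hr0
      have : distCard g = distCard (fwdMap (r := 0) g) := by
        unfold distCard
        congr 1
        congr 1
        ext a
        rw [himg a]
        simp
      rw [if_pos rfl, one_mul, this, hsum]
      simp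
    · have himg2 : Finset.univ.image (fun i : Fin m => ((g i).1))
          = insert (n+1) (Finset.univ.image (fun j : Fin (m - r) => ((fwdMap (r := r) g j).1))) := by
        ext a
        rw [himg a, Finset.mem_insert]
        constructor
        · rintro (⟨rfl, _⟩ | h2)
          · exact Or.inl rfl
          · exact Or.inr h2
        · rintro (rfl | h2)
          · exact Or.inl ⟨rfl, hr0⟩
          · exact Or.inr h2
      have hnotmem : (n+1) ∉ (Finset.univ.image
          (fun j : Fin (m - r) => ((fwdMap (r := r) g j).1))).erase 0 := by
        intro hmem
        rw [Finset.mem_erase, Finset.mem_image] at hmem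
        obtain ⟨_, j, _, hj⟩ := hmem
        have := (fwdMap (r := r) g j).2
        omega
      have hdist : distCard g = distCard (fwdMap (r := r) g) + 1 := by
        unfold distCard
        rw [himg2, Finset.erase_insert_of_ne (by omega : (n+1:ℕ) ≠ 0),
          Finset.card_insert_of_notMem hnotmem]
      rw [if_neg hr0, hdist, hsum, pow_add, pow_succ, pow_add]
      ring

end Stmt9Aux

namespace Stmt9Aux

lemma boxSum_zero_right {R : Type*} [CommRing R] (x q : R) (m : ℕ) :
    boxSum x q m 0 = 1 := by
  unfold boxSum
  have h1 : (Finset.univ.filter (fun g : Fin m → Fin 1 => ∀ i j : Fin m, i ≤ j → g j ≤ g i))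
      = Finset.univ := by
    apply Finset.filter_true_of_mem
    intro g _ i j _
    exact le_of_eq (Subsingleton.elim _ _)
  rw [h1]
  have h2 : ∀ g : Fin m → Fin 1, x ^ distCard g * q ^ (∑ i, ((g i : ℕ))) = 1 := by
    intro g
    have hd : distCard g = 0 := by
      unfold distCard
      rw [Finset.card_eq_zero, Finset.eq_empty_iff_forall_notMem]
      intro a ha
      rw [Finset.mem_erase, Finset.mem_image] at ha
      obtain ⟨hne, i, _, hi⟩ := ha
      have := (g i).isLt
      omega
    have hs : (∑ i, ((g i : ℕ))) = 0 := Finset.sum_eq_zero (fun i _ => by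
      have := (g i).isLt; omega)
    rw [hd, hs]; simp
  rw [Finset.sum_congr rfl (fun g _ => h2 g)]
  simp

lemma exp_eq' (k m r : ℕ) (h1 : r < m) (h2 : m ≤ k) :
    (k+1)^2 - (k-r)^2 + (m-r-1)^2 = m^2 + (k+1-m)*(r+1)*2 := by
  obtain ⟨u, rfl⟩ : ∃ u, k = m + u := ⟨k - m, by omega⟩
  obtain ⟨v, rfl⟩ : ∃ v, m = r + 1 + v := ⟨m - r - 1, by omega⟩
  have e1 : r + 1 + v + u - r = v + u + 1 := by omega
  have e2 : r + 1 + v - r - 1 = v := by omega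
  have e3 : r + 1 + v + u + 1 - (r + 1 + v) = u + 1 := by omega
  rw [e1, e2, e3, Nat.sq_sub_sq]
  have e4 : r + 1 + v + u + 1 - (v + u + 1) = r + 1 := by omega
  rw [e4]
  ring

lemma boxSum_succ_right {R : Type*} [CommRing R] (x q : R) (m n : ℕ) :
    boxSum x q m (n+1) = ∑ r ∈ Finset.range (m+1),
      (if r = 0 then 1 else x * q ^ ((n+1)*r)) * boxSum x q (m - r) n := by
  conv_lhs => rw [boxSum]
  have hmap : ∀ g ∈ Finset.univ.filter
      (fun g : Fin m → Fin (n+2) => ∀ i j : Fin m, i ≤ j → g j ≤ g i),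
      (Finset.univ.filter (fun i => g i = Fin.last (n+1))).card ∈ Finset.range (m+1) := by
    intro g _
    rw [Finset.mem_range]
    have := Finset.card_filter_le (Finset.univ : Finset (Fin m))
      (fun i => g i = Fin.last (n+1))
    simp only [Finset.card_univ, Fintype.card_fin] at this
    omega
  rw [← Finset.sum_fiberwise_of_maps_to hmap
    (fun g => x ^ distCard g * q ^ (∑ i, (g i : ℕ)))]
  exact Finset.sum_congr rfl (fun r hr =>
    fiber_sum x q m n r (by rw [Finset.mem_range] at hr; omega))

end Stmt9Aux

namespace Stmt9Aux

variable {R : Type*} [CommRing R]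

def UU (t q : R) (k : ℕ) : R :=
  ∑ m ∈ Finset.range (k+1), (-q) ^ (m^2) * boxSum (1-t^2) (q^2) m (k-m)

def WW (t q : R) (k : ℕ) : R :=
  ∑ m ∈ Finset.range k, (-q) ^ ((m+1)^2) * boxSum (1-t^2) (q^2) m (k-1-m)

lemma hqpow (q : R) : ∀ s : ℕ, ((q:R)^2)^s = (-q)^(s*2) := by
  intro s
  rw [Even.neg_pow ⟨s, by ring⟩ q, ← pow_mul, Nat.mul_comm]

lemma U_rec (t q : R) (k : ℕ) :
    UU t q (k+1) = UU t q k + (-q) ^ ((k+1)^2)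
      + (1-t^2) * ∑ i ∈ Finset.range k, (-q) ^ ((k+1)^2-(i+1)^2) * UU t q i := by
  have hterm : ∀ m ∈ Finset.range (k+1),
      (-q)^(m^2) * boxSum (1-t^2) (q^2) m (k+1-m)
      = (∑ r ∈ Finset.range m, (1-t^2) *
          ((-q)^(m^2 + ((k-m)+1)*(r+1)*2) * boxSum (1-t^2) (q^2) (m-(r+1)) (k-m)))
        + (-q)^(m^2) * boxSum (1-t^2) (q^2) m (k-m) := by
    intro m hm
    rw [Finset.mem_range] at hm
    have h1 : k+1-m = (k-m)+1 := by omega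
    rw [h1, boxSum_succ_right, Finset.mul_sum, Finset.sum_range_succ']
    congr 1
    · apply Finset.sum_congr rfl
      intro r _
      rw [if_neg (Nat.succ_ne_zero r), hqpow q (((k-m)+1)*(r+1)), pow_add]
      ring
    · simp
  simp only [UU]
  rw [Finset.sum_range_succ, Nat.sub_self, boxSum_zero_right, mul_one,
    Finset.sum_congr rfl hterm, Finset.sum_add_distrib]
  have hrhs : ∀ i ∈ Finset.range k,
      (-q)^((k+1)^2-(i+1)^2) * ∑ a ∈ Finset.range (i+1),
        (-q)^(a^2) * boxSum (1-t^2) (q^2) a (i-a)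
      = ∑ a ∈ Finset.range (i+1),
        (-q)^(((k+1)^2-(i+1)^2) + a^2) * boxSum (1-t^2) (q^2) a (i-a) := by
    intro i _
    rw [Finset.mul_sum]
    exact Finset.sum_congr rfl (fun a _ => by rw [pow_add]; ring)
  rw [Finset.sum_congr rfl hrhs, Finset.mul_sum]
  rw [Finset.sum_congr rfl (fun i (_ : i ∈ Finset.range k) => Finset.mul_sum
    (Finset.range (i+1)) (fun a => (-q)^(((k+1)^2-(i+1)^2) + a^2)
      * boxSum (1-t^2) (q^2) a (i-a)) (1-t^2))]
  have hmain : ∑ m ∈ Finset.range (k+1), ∑ r ∈ Finset.range m, (1-t^2) *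
        ((-q)^(m^2 + ((k-m)+1)*(r+1)*2) * boxSum (1-t^2) (q^2) (m-(r+1)) (k-m))
      = ∑ i ∈ Finset.range k, ∑ a ∈ Finset.range (i+1), (1-t^2) *
        ((-q)^(((k+1)^2-(i+1)^2) + a^2) * boxSum (1-t^2) (q^2) a (i-a)) := by
    rw [Finset.sum_sigma', Finset.sum_sigma']
    refine Finset.sum_nbij' (fun p : Σ _ : ℕ, ℕ => (⟨k - 1 - p.2, p.1 - p.2 - 1⟩ : Σ _ : ℕ, ℕ))
      (fun p : Σ _ : ℕ, ℕ => (⟨p.2 + (k - p.1), k - 1 - p.1⟩ : Σ _ : ℕ, ℕ)) ?_ ?_ ?_ ?_ ?_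
    · rintro ⟨m, r⟩ hp
      simp only [Finset.mem_sigma, Finset.mem_range] at hp ⊢
      omega
    · rintro ⟨i, a⟩ hp
      simp only [Finset.mem_sigma, Finset.mem_range] at hp ⊢
      omega
    · rintro ⟨m, r⟩ hp
      simp only [Finset.mem_sigma, Finset.mem_range] at hp
      dsimp only
      refine Sigma.ext ?_ ?_ <;> simp only [heq_eq_eq] <;> omega
    · rintro ⟨i, a⟩ hp
      simp only [Finset.mem_sigma, Finset.mem_range] at hp
      dsimp only
      refine Sigma.ext ?_ ?_ <;> simp only [heq_eq_eq] <;> omega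
    · rintro ⟨m, r⟩ hp
      simp only [Finset.mem_sigma, Finset.mem_range] at hp
      obtain ⟨hm, hr⟩ := hp
      have e7 : m^2 + ((k-m)+1)*(r+1)*2 = ((k+1)^2 - ((k-1-r)+1)^2) + (m-r-1)^2 := by
        have e8 : (k-1-r)+1 = k-r := by omega
        have e9 : (k-m)+1 = k+1-m := by omega
        rw [e8, e9]
        exact (exp_eq' k m r hr (by omega)).symm
      have e5 : m - (r+1) = m - r - 1 := by omega
      have e6 : k - m = (k - 1 - r) - (m - r - 1) := by omega
      rw [e7, e5, e6]
  rw [hmain]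
  ring

end Stmt9Aux

namespace Stmt9Aux

lemma W_rec {R : Type*} [CommRing R] (t q : R) (k : ℕ) :
    WW t q (k+1) = WW t q k + (-q) ^ ((k+1)^2)
      + (1-t^2) * ∑ i ∈ Finset.range k, (-q) ^ ((k+1)^2-(i+1)^2) * WW t q i := by
  have hterm : ∀ m ∈ Finset.range k,
      (-q)^((m+1)^2) * boxSum (1-t^2) (q^2) m (k-m)
      = (∑ r ∈ Finset.range m, (1-t^2) *
          ((-q)^((m+1)^2 + ((k-1-m)+1)*(r+1)*2) * boxSum (1-t^2) (q^2) (m-(r+1)) (k-1-m)))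
        + (-q)^((m+1)^2) * boxSum (1-t^2) (q^2) m (k-1-m) := by
    intro m hm
    rw [Finset.mem_range] at hm
    have h1 : k-m = (k-1-m)+1 := by omega
    rw [h1, boxSum_succ_right, Finset.mul_sum, Finset.sum_range_succ']
    congr 1
    · apply Finset.sum_congr rfl
      intro r _
      rw [if_neg (Nat.succ_ne_zero r), hqpow q (((k-1-m)+1)*(r+1)), pow_add]
      ring
    · simp
  simp only [WW, Nat.add_sub_cancel]
  rw [Finset.sum_range_succ, Nat.sub_self, boxSum_zero_right, mul_one,
    Finset.sum_congr rfl hterm, Finset.sum_add_distrib]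
  have hrhs : ∀ i ∈ Finset.range k,
      (-q)^((k+1)^2-(i+1)^2) * ∑ a ∈ Finset.range i,
        (-q)^((a+1)^2) * boxSum (1-t^2) (q^2) a (i-1-a)
      = ∑ a ∈ Finset.range i,
        (-q)^(((k+1)^2-(i+1)^2) + (a+1)^2) * boxSum (1-t^2) (q^2) a (i-1-a) := by
    intro i _
    rw [Finset.mul_sum]
    exact Finset.sum_congr rfl (fun a _ => by rw [pow_add]; ring)
  rw [Finset.sum_congr rfl hrhs, Finset.mul_sum]
  rw [Finset.sum_congr rfl (fun i (_ : i ∈ Finset.range k) => Finset.mul_sum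
    (Finset.range i) (fun a => (-q)^(((k+1)^2-(i+1)^2) + (a+1)^2)
      * boxSum (1-t^2) (q^2) a (i-1-a)) (1-t^2))]
  have hmain : ∑ m ∈ Finset.range k, ∑ r ∈ Finset.range m, (1-t^2) *
        ((-q)^((m+1)^2 + ((k-1-m)+1)*(r+1)*2) * boxSum (1-t^2) (q^2) (m-(r+1)) (k-1-m))
      = ∑ i ∈ Finset.range k, ∑ a ∈ Finset.range i, (1-t^2) *
        ((-q)^(((k+1)^2-(i+1)^2) + (a+1)^2) * boxSum (1-t^2) (q^2) a (i-1-a)) := by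
    rw [Finset.sum_sigma', Finset.sum_sigma']
    refine Finset.sum_nbij' (fun p : Σ _ : ℕ, ℕ => (⟨k - 1 - p.2, p.1 - p.2 - 1⟩ : Σ _ : ℕ, ℕ))
      (fun p : Σ _ : ℕ, ℕ => (⟨p.2 + (k - p.1), k - 1 - p.1⟩ : Σ _ : ℕ, ℕ)) ?_ ?_ ?_ ?_ ?_
    · rintro ⟨m, r⟩ hp
      simp only [Finset.mem_sigma, Finset.mem_range] at hp ⊢
      omega
    · rintro ⟨i, a⟩ hp
      simp only [Finset.mem_sigma, Finset.mem_range] at hp ⊢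
      omega
    · rintro ⟨m, r⟩ hp
      simp only [Finset.mem_sigma, Finset.mem_range] at hp
      dsimp only
      refine Sigma.ext ?_ ?_ <;> simp only [heq_eq_eq] <;> omega
    · rintro ⟨i, a⟩ hp
      simp only [Finset.mem_sigma, Finset.mem_range] at hp
      dsimp only
      refine Sigma.ext ?_ ?_ <;> simp only [heq_eq_eq] <;> omega
    · rintro ⟨m, r⟩ hp
      simp only [Finset.mem_sigma, Finset.mem_range] at hp
      obtain ⟨hm, hr⟩ := hp
      have e7 : (m+1)^2 + ((k-1-m)+1)*(r+1)*2
          = ((k+1)^2 - ((k-1-r)+1)^2) + ((m-r-1)+1)^2 := by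
        have e8 : (k-1-r)+1 = k-r := by omega
        have e9 : (k-1-m)+1 = (k+1)-(m+1) := by omega
        have e10 : (m-r-1)+1 = (m+1)-r-1 := by omega
        rw [e8, e9, e10]
        exact (exp_eq' k (m+1) r (by omega) (by omega)).symm
      have e5 : m - (r+1) = m - r - 1 := by omega
      have e6 : k - 1 - m = (k - 1 - r) - 1 - (m - r - 1) := by omega
      rw [e7, e5, e6]
  rw [hmain]
  ring

end Stmt9Aux

namespace Stmt9Aux

lemma S_split {R : Type*} [CommRing R] (t q : R) (j : ℕ) :
    ∑ m ∈ Finset.range (j+1), (-q) ^ (m^2) *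
      (boxSum (1-t^2) (q^2) m (j-m)
        + t * (if m = 0 then 0 else boxSum (1-t^2) (q^2) (m-1) (j-m)))
    = UU t q j + t * WW t q j := by
  have h1 : ∀ m ∈ Finset.range (j+1), (-q)^(m^2) *
      (boxSum (1-t^2) (q^2) m (j-m)
        + t * (if m = 0 then 0 else boxSum (1-t^2) (q^2) (m-1) (j-m)))
      = (-q)^(m^2) * boxSum (1-t^2) (q^2) m (j-m)
        + (-q)^(m^2) * (t * (if m = 0 then 0
            else boxSum (1-t^2) (q^2) (m-1) (j-m))) := by
    intro m _; ring
  rw [Finset.sum_congr rfl h1, Finset.sum_add_distrib]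
  congr 1
  rw [Finset.sum_range_succ']
  simp only [Nat.succ_ne_zero, if_false, if_pos rfl, Nat.add_sub_cancel, mul_zero, add_zero]
  have h2 : ∀ m ∈ Finset.range j, (-q)^((m+1)^2) * (t * boxSum (1-t^2) (q^2) m (j-(m+1)))
      = t * ((-q)^((m+1)^2) * boxSum (1-t^2) (q^2) m (j-1-m)) := by
    intro m _
    have : j - (m+1) = j - 1 - m := by omega
    rw [this]; ring
  rw [Finset.sum_congr rfl h2, ← Finset.mul_sum, WW]
  simp

lemma UU_zero {R : Type*} [CommRing R] (t q : R) : UU t q 0 = 1 := by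
  simp [UU, boxSum_zero_right]

lemma WW_zero {R : Type*} [CommRing R] (t q : R) : WW t q 0 = 0 := by
  simp [WW]

end Stmt9Aux

open Stmt9Aux in
theorem stmt_9 {R : Type*} [CommRing R] (t q : R) (k : ℕ) :
    T t q k = ∑ j ∈ Finset.range (k+1),
      (-q) ^ (j^2) *
        (boxSum (1 - t^2) (q^2) j (k-j)
          + t * (if j = 0 then 0 else boxSum (1 - t^2) (q^2) (j-1) (k-j))) := by
  induction k using Nat.strong_induction_on with
  | _ k IH =>
    match k with
    | 0 =>
      rw [T, S_split, UU_zero, WW_zero]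
      ring
    | (k+1) =>
      rw [T, S_split, U_rec, W_rec,
        Finset.sum_attach (Finset.range k)
          (fun i => (-q) ^ ((k+1)^2 - (i+1)^2) * T t q i),
        IH k (Nat.lt_succ_self k), S_split,
        Finset.sum_congr rfl (fun i (hi : i ∈ Finset.range k) => by
          rw [IH i (by rw [Finset.mem_range] at hi; omega), S_split]),
        Finset.sum_congr rfl (fun i (_ : i ∈ Finset.range k) =>
          (by ring : (-q) ^ ((k+1)^2 - (i+1)^2) * (UU t q i + t * WW t q i)
            = (-q) ^ ((k+1)^2 - (i+1)^2) * UU t q i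
              + t * ((-q) ^ ((k+1)^2 - (i+1)^2) * WW t q i))),
        Finset.sum_add_distrib, ← Finset.mul_sum]
      ring
end

section
/- Let q be an element of a commutative ring. For every integer k ≥ 0, (1 + q) · T_k(−q, q) = 1 + q^{2k+1}. -/
lemma sq_mod_two' (n : ℕ) : n^2 % 2 = n % 2 := by
  rw [Nat.pow_mod]
  rcases Nat.mod_two_eq_zero_or_one n with h | h <;> rw [h]

lemma neg_one_pow_mod' {R : Type*} [CommRing R] {a b : ℕ} (h : a % 2 = b % 2) :
    (-1 : R)^a = (-1)^b := by
  rcases Nat.even_or_odd a with ha | ha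
  · have hb : Even b := by rw [Nat.even_iff] at *; omega
    rw [ha.neg_one_pow, hb.neg_one_pow]
  · have hb : Odd b := by rw [Nat.odd_iff] at *; omega
    rw [ha.neg_one_pow, hb.neg_one_pow]

theorem stmt_10 {R : Type*} [CommRing R] (q : R) (k : ℕ) :
    (1 + q) * T (-q) q k = 1 + q^(2*k+1) := by
  induction k using Nat.strong_induction_on with
  | _ k ih =>
    match k with
    | 0 => rw [T]; ring
    | (m+1) =>
      rw [T, Finset.sum_attach (Finset.range m)
        (fun i => (-q) ^ ((m+1)^2 - (i+1)^2) * T (-q) q i)]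
      set F : ℕ → R := fun i => (-1:R)^(m+i) * q^((m+1)^2 - i^2) with hF
      have hterm : ∀ i ∈ Finset.range m,
          (1+q) * ((-q) ^ ((m+1)^2 - (i+1)^2) * T (-q) q i) = F i - F (i+1) := by
        intro i hi
        have hi' : i < m := Finset.mem_range.mp hi
        have hab : (i+1)^2 ≤ (m+1)^2 := Nat.pow_le_pow_left (by omega) 2
        have hbc : (i+1)^2 = i^2 + 2*i + 1 := by ring
        have ha2 := sq_mod_two' (m+1)
        have hb2 := sq_mod_two' (i+1)
        have hc2 := sq_mod_two' i
        have hmod : ((m+1)^2 - (i+1)^2) % 2 = (m + i) % 2 := by omega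
        have hexp : (m+1)^2 - i^2 = ((m+1)^2 - (i+1)^2) + (2*i+1) := by omega
        have hih := ih i (Nat.lt_succ_of_lt hi')
        have hA : (-q) ^ ((m+1)^2 - (i+1)^2)
            = (-1:R)^(m+i) * q ^ ((m+1)^2 - (i+1)^2) := by
          rw [neg_pow, neg_one_pow_mod' hmod]
        simp only [hF, hexp, pow_add]
        rw [hA]
        generalize ((m:ℕ)+1)^2 - (i+1)^2 = e
        linear_combination ((-1:R))^(m+i) * q ^ e * hih
      have hsum : (1+q) * (∑ i ∈ Finset.range m,
            (-q)^((m+1)^2-(i+1)^2) * T (-q) q i)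
          = (-1:R)^m * q^((m+1)^2) - q^(2*m+1) := by
        rw [Finset.mul_sum, Finset.sum_congr rfl hterm, Finset.sum_range_sub' F]
        have h1 : (m+1)^2 - m^2 = 2*m+1 := by
          have : (m+1)^2 = m^2+2*m+1 := by ring
          omega
        simp only [hF, Nat.add_zero, Nat.zero_pow, Nat.sub_zero, h1,
          show m + m = 2*m from by ring, pow_mul, neg_one_sq, one_pow, one_mul]
        norm_num
      have hA1 : (-q) ^ ((m+1)^2) = -((-1:R)^m * q^((m+1)^2)) := by
        rw [neg_pow, neg_one_pow_mod' (a := (m+1)^2) (b := m+1) (sq_mod_two' (m+1)),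
          pow_succ]
        ring
      have hTm := ih m (Nat.lt_succ_self m)
      have hq : q^(2*(m+1)+1) = q^(2*m+1) * q^2 := by
        rw [← pow_add, show 2*m+1+2 = 2*(m+1)+1 from by ring]
      generalize hN : ((m:ℕ)+1)^2 = N at hsum hA1 ⊢
      linear_combination hTm + (1 - q^2) * hsum + (1-q)*(1+q)*hA1 + hq
end

section
/- Let K be a field and let q ∈ K be nonzero. For every integer k ≥ 0, T_k(q^{−1}, q) = (−1)^k · q^{k^2}. -/
lemma negq_sq {K : Type*} [Field K] (q : K) (m : ℕ) :
    (-q)^(m^2) = (-1)^m * q^(m^2) := by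
  rw [neg_pow]
  congr 1
  rcases Nat.even_or_odd m with h | h
  · rw [(Nat.even_pow.mpr ⟨h, two_ne_zero⟩).neg_one_pow, h.neg_one_pow]
  · rw [(h.pow).neg_one_pow, h.neg_one_pow]

lemma Taux {K : Type*} [Field K] (q : K) (hq : q ≠ 0) (k : ℕ) :
    T q⁻¹ q k = (-q)^(k^2) := by
  induction k using Nat.strong_induction_on with
  | _ k ih =>
    match k with
    | 0 => simp [T]
    | (k+1) =>
      rw [T]
      have hsum : (∑ i ∈ (Finset.range k).attach,
          (-q) ^ ((k+1)^2 - (i.1+1)^2) * T q⁻¹ q i.1)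
          = (-q)^(k^2) * ∑ i ∈ Finset.range k, q^(2*(k-i)) := by
        rw [Finset.sum_attach (Finset.range k)
          (fun i => (-q) ^ ((k+1)^2 - (i+1)^2) * T q⁻¹ q i)]
        rw [Finset.mul_sum]
        apply Finset.sum_congr rfl
        intro i hi
        have hik : i < k := Finset.mem_range.mp hi
        rw [ih i (by omega), ← pow_add,
          show q^(2*(k-i)) = (-q)^(2*(k-i)) from by
            rw [pow_mul, pow_mul, neg_sq],
          ← pow_add]
        congr 1
        obtain ⟨d, rfl⟩ : ∃ d, k = i + d := ⟨k - i, by omega⟩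
        have h1 : (i+d+1)^2 - (i+1)^2 = d*(d+2*i+2) := by
          have h : (i+d+1)^2 = (i+1)^2 + d*(d+2*i+2) := by ring
          rw [h, Nat.add_sub_cancel_left]
        rw [h1, Nat.add_sub_cancel_left]
        ring
      rw [hsum, ih k (Nat.lt_succ_self k)]
      have hsum2 : (1 - (q⁻¹)^2) * ∑ i ∈ Finset.range k, q^(2*(k-i))
          = q^(2*k) - 1 := by
        rw [Finset.mul_sum,
          Finset.sum_congr rfl (fun i hi => ?_), Finset.sum_range_sub'
            (fun i => q^(2*(k-i)))]
        · simp
        · have hik : i < k := Finset.mem_range.mp hi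
          have e : 2*(k-i) = 2*(k-(i+1)) + 2 := by omega
          rw [e, pow_add]
          have h2 : (q⁻¹)^2 * q^2 = 1 := by
            rw [← mul_pow, inv_mul_cancel₀ hq, one_pow]
          field_simp
      rw [show (1 - (q⁻¹)^2) * ((-q)^(k^2) * ∑ i ∈ Finset.range k, q^(2*(k-i)))
          = (-q)^(k^2) * ((1 - (q⁻¹)^2) * ∑ i ∈ Finset.range k, q^(2*(k-i)))
          from by ring, hsum2]
      have hkk : (k+1)^2 = k^2 + (2*k+1) := by ring
      rw [hkk, pow_add, show (-q)^(2*k+1) = q^(2*k) * (-q) from by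
        rw [pow_succ, pow_mul, neg_sq, pow_mul]]
      field_simp
      ring

theorem stmt_11 {K : Type*} [Field K] (q : K) (hq : q ≠ 0) (k : ℕ) :
    T q⁻¹ q k = (-1)^k * q^(k^2) := by
  rw [Taux q hq, negq_sq]
end

section
/- Let K be a field and let q ∈ K be nonzero. For every integer k ≥ 0, T_k(−q^{−1}, q) = Σ_{i=−k}^{k} (−1)^{k−i} · q^{k^2 − i^2}. -/
noncomputable def Ssum {K : Type*} [Field K] (q : K) (k : ℕ) : K :=
  ∑ i ∈ Finset.Icc (-(k:ℤ)) (k:ℤ), (-1 : K) ^ ((k:ℤ) - i) * q ^ ((k:ℤ)^2 - i^2)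

lemma Ssum_zero {K : Type*} [Field K] (q : K) : Ssum q 0 = 1 := by simp [Ssum]

lemma Ssum_succ {K : Type*} [Field K] (q : K) (hq : q ≠ 0) (k : ℕ) :
    Ssum q (k+1) = -(q ^ (2*k+1)) * Ssum q k + 2 := by
  have hset : Finset.Icc (-((k+1:ℕ):ℤ)) ((k+1:ℕ):ℤ) =
      insert (-((k:ℤ)+1)) (insert ((k:ℤ)+1) (Finset.Icc (-(k:ℤ)) (k:ℤ))) := by
    ext x; simp; omega
  rw [Ssum, hset, Finset.sum_insert (by simp <;> omega), Finset.sum_insert (by simp <;> omega)]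
  have h1 : (-1 : K) ^ (((k+1:ℕ):ℤ) - (-((k:ℤ)+1))) * q ^ ((((k+1:ℕ):ℤ))^2 - (-((k:ℤ)+1))^2) = 1 := by
    have e1 : (((k+1:ℕ):ℤ) - (-((k:ℤ)+1))) = 2*((k:ℤ)+1) := by push_cast; ring
    have e2 : ((((k+1:ℕ):ℤ))^2 - (-((k:ℤ)+1))^2) = 0 := by push_cast; ring
    rw [e1, e2, zpow_zero, mul_one]
    exact Even.neg_one_zpow ⟨(k:ℤ)+1, by ring⟩
  have h2 : (-1 : K) ^ (((k+1:ℕ):ℤ) - ((k:ℤ)+1)) * q ^ ((((k+1:ℕ):ℤ))^2 - ((k:ℤ)+1)^2) = 1 := by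
    have e1 : (((k+1:ℕ):ℤ) - ((k:ℤ)+1)) = 0 := by push_cast; ring
    have e2 : ((((k+1:ℕ):ℤ))^2 - ((k:ℤ)+1)^2) = 0 := by push_cast; ring
    rw [e1, e2]; simp
  rw [h1, h2]
  have h3 : ∀ i ∈ Finset.Icc (-(k:ℤ)) (k:ℤ),
      (-1 : K) ^ (((k+1:ℕ):ℤ) - i) * q ^ ((((k+1:ℕ):ℤ))^2 - i^2)
      = -(q ^ (2*k+1)) * ((-1 : K) ^ ((k:ℤ) - i) * q ^ ((k:ℤ)^2 - i^2)) := by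
    intro i _
    have e1 : (((k+1:ℕ):ℤ) - i) = 1 + ((k:ℤ) - i) := by push_cast; ring
    have e2 : ((((k+1:ℕ):ℤ))^2 - i^2) = ((2*k+1:ℕ):ℤ) + ((k:ℤ)^2 - i^2) := by push_cast; ring
    rw [e1, e2, zpow_add₀ (by norm_num : (-1:K) ≠ 0), zpow_add₀ hq, zpow_one, zpow_natCast]
    ring
  rw [Finset.sum_congr rfl h3, ← Finset.mul_sum, ← Ssum]
  ring

lemma star {K : Type*} [Field K] (q : K) (hq : q ≠ 0) (k : ℕ) :
    Ssum q (k+1) = Ssum q k + (1 + -q⁻¹) * (-q) ^ ((k+1)^2) +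
      (1 - (-q⁻¹)^2) * ∑ i ∈ Finset.range k, (-q) ^ ((k+1)^2 - (i+1)^2) * Ssum q i := by
  induction k with
  | zero =>
    rw [Ssum_succ q hq 0, Ssum_zero]
    simp
    field_simp
    ring
  | succ k IH =>
    rw [Finset.sum_range_succ]
    have hee : (k+2)^2 - (k+1)^2 = 2*k+3 := by
      have h := Nat.pow_le_pow_left (show k+1 ≤ k+2 by omega) 2
      zify [h]; ring
    have hsum : ∑ i ∈ Finset.range k, (-q) ^ ((k+1+1)^2 - (i+1)^2) * Ssum q i
        = (-q)^(2*k+3) * ∑ i ∈ Finset.range k, (-q) ^ ((k+1)^2 - (i+1)^2) * Ssum q i := by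
      rw [Finset.mul_sum]
      refine Finset.sum_congr rfl ?_
      intro i hi
      have hik : i < k := Finset.mem_range.mp hi
      have h1 : (i+1)^2 ≤ (k+1)^2 := Nat.pow_le_pow_left (by omega) 2
      have h2 : (i+1)^2 ≤ (k+2)^2 := Nat.pow_le_pow_left (by omega) 2
      have e : (k+1+1)^2 - (i+1)^2 = (2*k+3) + ((k+1)^2 - (i+1)^2) := by zify [h1, h2]; ring
      rw [e, pow_add]; ring
    have htop : (k+1+1)^2 - (k+1)^2 = 2*k+3 := hee
    rw [hsum, htop]
    have hodd : ((-q):K)^(2*k+3) = -(q^(2*k+3)) := Odd.neg_pow ⟨k+1, by ring⟩ q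
    have hb : ((-q):K)^((k+1+1)^2) = (-q)^((k+1)^2) * (-q)^(2*k+3) := by
      rw [← pow_add]; congr 1; ring
    have hS1 := Ssum_succ q hq k
    have hS2 := Ssum_succ q hq (k+1)
    have h23 : 2*(k+1)+1 = 2*k+3 := by ring
    rw [h23] at hS2
    have hq3 : (q:K)^(2*k+3) = q^(2*k+1) * q^2 := by rw [← pow_add]
    have hinv : q⁻¹ * q = 1 := inv_mul_cancel₀ hq
    rw [hS1] at IH
    rw [hS2, hS1, hodd, hb, hodd, hq3]
    linear_combination (-(q^(2*k+1) * q^2)) * IH + (-(q^(2*k+1) * Ssum q k * (1 + q⁻¹*q))) * hinv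

theorem stmt_12 {K : Type*} [Field K] (q : K) (hq : q ≠ 0) (k : ℕ) :
    T (-q⁻¹) q k =
      ∑ i ∈ Finset.Icc (-(k:ℤ)) (k:ℤ), (-1 : K) ^ ((k:ℤ) - i) * q ^ ((k:ℤ)^2 - i^2) := by

  induction k using Nat.strong_induction_on with
  | _ k ih =>
    match k with
    | 0 => rw [T]; simp
    | (k+1) =>
      rw [T]
      have hattach : ∑ i ∈ (Finset.range k).attach,
          (-q) ^ ((k+1)^2 - (i.1+1)^2) * T (-q⁻¹) q i.1
          = ∑ i ∈ Finset.range k, (-q) ^ ((k+1)^2 - (i+1)^2) * Ssum q i := by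
        rw [← Finset.sum_attach (Finset.range k)
          (fun i => (-q) ^ ((k+1)^2 - (i+1)^2) * Ssum q i)]
        refine Finset.sum_congr rfl fun i _ => ?_
        rw [ih i.1 (Nat.lt_succ_of_lt (Finset.mem_range.mp i.2))]
        rfl
      rw [hattach, ih k (Nat.lt_succ_self k)]
      show Ssum q k + _ + _ = Ssum q (k+1)
      exact (star q hq k).symm
end

section
/- Let K be a field and let q ∈ K be nonzero. For every integer n ≥ 0, Ẽ_n(−q^{−1}, q) = Σ_{k=0}^{n} (binom(2n, n−k) − binom(2n, n−k−1)) · Σ_{i=−k}^{k} (−1)^i · q^{i^2}, where binom denotes the ordinary binomial coefficient (with binom(2n, m) = 0 for m < 0). -/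
namespace Aux14
open Finset

variable {K : Type*} [Field K]

def gb (Q : K) : ℕ → ℕ → K
  | _, 0 => 1
  | 0, _+1 => 0
  | n+1, k+1 => gb Q n (k+1) + Q^(n-k) * gb Q n k

lemma gb_zero (Q : K) (n : ℕ) : gb Q n 0 = 1 := by cases n <;> rfl

lemma gb_succ (Q : K) (n k : ℕ) :
    gb Q (n+1) (k+1) = gb Q n (k+1) + Q^(n-k) * gb Q n k := rfl

lemma gb_big (Q : K) : ∀ n k, n < k → gb Q n k = 0 := by
  intro n
  induction n with
  | zero =>
    intro k hk
    match k, hk with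
    | (k+1), _ => rfl
  | succ n ih =>
    intro k hk
    match k, hk with
    | (k+1), hk =>
      rw [gb_succ, ih _ (by omega), ih _ (by omega)]; ring

lemma gb_self (Q : K) : ∀ n, gb Q n n = 1 := by
  intro n
  induction n with
  | zero => rfl
  | succ n ih => rw [gb_succ, ih, gb_big Q n (n+1) (by omega), Nat.sub_self]; ring

lemma gb34 (Q : K) : ∀ n : ℕ,
    (∀ r, r ≤ n+1 → (1 - Q^(n+1-r)) * gb Q (n+1) r = (1 - Q^(n+1)) * gb Q n r) ∧
    (∀ r, (1 - Q^(r+1)) * gb Q (n+1) (r+1) = (1 - Q^(n+1)) * gb Q n r) := by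
  intro n
  induction n with
  | zero =>
    constructor
    · intro r hr
      interval_cases r
      · simp [gb_zero]
      · rw [gb_big Q 0 1 (by omega)]
        norm_num
    · intro r
      cases r with
      | zero =>
        rw [gb_succ, gb_big Q 0 1 (by omega)]; norm_num
      | succ s =>
        rw [gb_succ, gb_big Q 0 (s+2) (by omega), gb_big Q 0 (s+1) (by omega)]
        ring
  | succ n ih =>
    obtain ⟨h3, h4⟩ := ih
    have h4' : ∀ r, (1 - Q^(r+1)) * gb Q (n+2) (r+1) = (1 - Q^(n+2)) * gb Q (n+1) r := by
      intro r
      by_cases hr : r ≤ n+1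
      · have e : Q^(n+1-r) * Q^(r+1) = Q^(n+2) := by rw [← pow_add]; congr 1; omega
        have h3r := h3 r hr
        have h4r := h4 r
        rw [gb_succ]
        linear_combination h4r - h3r - gb Q (n+1) r * e
      · rw [gb_succ, gb_big Q (n+1) (r+1) (by omega), gb_big Q (n+1) r (by omega)]
        ring
    refine ⟨?_, h4'⟩
    intro r hr
    cases r with
    | zero => simp [gb_zero]
    | succ s =>
      have hs : s ≤ n+1 := by omega
      have e : Q^(n+1-s) * Q^(s+1) = Q^(n+2) := by rw [← pow_add]; congr 1; omega
      have h3s := h3 s hs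
      have h4s := h4 s
      rw [show n+1+1-(s+1) = n+1-s from by omega, gb_succ]
      linear_combination Q^(n+1-s) * h3s - Q^(n+1-s) * h4s - gb Q (n+1) (s+1) * e

lemma gb_pascal2 (Q : K) : ∀ n r, gb Q (n+1) (r+1) = Q^(r+1) * gb Q n (r+1) + gb Q n r := by
  intro n
  induction n with
  | zero =>
    intro r
    cases r with
    | zero => rw [gb_succ, gb_big Q 0 1 (by omega)]; norm_num
    | succ s =>
      rw [gb_succ, gb_big Q 0 (s+2) (by omega), gb_big Q 0 (s+1) (by omega)]
      ring
  | succ n ih =>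
    intro r
    by_cases hr : r ≤ n
    · have h3r := (gb34 Q n).1 r (by omega)
      have e1 : Q^(r+1) * Q^(n-r) = Q^(n+1) := by rw [← pow_add]; congr 1; omega
      conv_lhs => rw [gb_succ Q (n+1) r, ih r]
      conv_rhs => rw [gb_succ Q n r]
      linear_combination -h3r - gb Q n r * e1
    · by_cases hr2 : r = n+1
      · subst hr2
        rw [gb_succ]
        norm_num [gb_big Q (n+1) (n+2) (by omega), gb_self]
      · rw [gb_big Q (n+2) (r+1) (by omega), gb_big Q (n+1) (r+1) (by omega),
          gb_big Q (n+1) r (by omega)]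
        ring

def DD (q : K) : ℕ → ℕ → K
  | 0, j => if j = 0 then 1 else 2 * (-1)^j * q^(j^2)
  | (h+1), j => (-1)^j * q^(j^2) * (1 - q^(2*j+(h+1))) * qPoch q q h * gb (q^2) (j+h) j

def AA (q : K) (h k : ℕ) : K := ∑ j ∈ range (k+1), DD q h j

lemma qPoch_succ (a q : K) (n : ℕ) : qPoch a q (n+1) = qPoch a q n * (1 - a*q^n) :=
  Finset.prod_range_succ _ _

lemma qPoch_zero (a q : K) : qPoch a q 0 = 1 := by simp [qPoch]

lemma DD_zero (q : K) (h : ℕ) : DD q h 0 = qPoch q q h := by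
  cases h with
  | zero => simp [DD, qPoch_zero]
  | succ h => simp only [DD, gb_zero, qPoch_succ]; ring

lemma AA_zero (q : K) (h : ℕ) : AA q h 0 = DD q h 0 := by
  unfold AA
  exact Finset.sum_range_one _

lemma DD_zero_succ (q : K) (h : ℕ) : DD q (h+1) 0 = (1 - q^(h+1)) * DD q h 0 := by
  rw [DD_zero, DD_zero, qPoch_succ]; ring

lemma czero (q : K) (h : ℕ) : AA q (h+1) 0 = (1 - q^(h+1)) * AA q h 0 := by
  rw [AA_zero, AA_zero, DD_zero_succ]

lemma P1 (q : K) (j : ℕ) :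
    DD q 1 (j+1) + DD q 1 j = (1-q^1)*DD q 0 (j+1) + (1+q^1)*DD q 2 j := by
  have h := (gb34 (q^2) j).1 j (by omega)
  rw [show j+1-j = 1 from by omega, gb_self] at h
  simp only [DD, if_neg (Nat.succ_ne_zero j), qPoch_zero, qPoch_succ, gb_self,
    Nat.add_zero]
  linear_combination (-(-1:K)^j * q^(j^2) * (1 - q^(2*j+2))) * h

lemma P2 (q : K) (i j : ℕ) :
    DD q (i+2) (j+1) + DD q (i+2) j
      = (1-q^(i+2))*DD q (i+1) (j+1) + (1+q^(i+2))*DD q (i+3) j := by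
  have e1 : gb (q^2) (j+i+2) (j+1)
      = gb (q^2) (j+i+1) (j+1) + (q^2)^(i+1) * gb (q^2) (j+i+1) j := by
    rw [gb_succ, show j+i+1-j = i+1 from by omega]
  have e2 := gb_pascal2 (q^2) (j+i+1) j
  have e3 : (1 - (q^2)^(i+2)) * gb (q^2) (j+i+2) j
      = (1 - (q^2)^(j+i+2)) * gb (q^2) (j+i+1) j := by
    have h := (gb34 (q^2) (j+i+1)).1 j (by omega)
    rwa [show j+i+1+1-j = i+2 from by omega, show j+i+1+1 = j+i+2 from by omega] at h
  simp only [DD]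
  rw [show j+1+(i+1) = j+i+2 from by omega, show j+(i+1) = j+i+1 from by omega,
    show j+(i+2) = j+i+2 from by omega, show j+1+i = j+i+1 from by omega,
    qPoch_succ q q (i+1), qPoch_succ q q i]
  linear_combination
    (-(-1:K)^j * q^(j^2) * q^(2*j) * q * (1 - q^(2*j+i+4)) * qPoch q q i * (1-q*q^i)
      - (-1:K)^j * q^(j^2) * q^(2*j) * q^(i+2) * (1-q) * qPoch q q i) * e1
    + ((-1:K)^j * q^(j^2) * q^(2*j) * q^(i+2) * (1-q) * qPoch q q i) * e2
    + (-(-1:K)^j * q^(j^2) * (1 - q^(2*j+i+3)) * qPoch q q i * (1-q*q^i)) * e3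

lemma Pall (q : K) (h j : ℕ) :
    DD q (h+1) (j+1) + DD q (h+1) j
      = (1-q^(h+1))*DD q h (j+1) + (1+q^(h+1))*DD q (h+2) j := by
  cases h with
  | zero => simpa using P1 q j
  | succ i => exact P2 q i j

lemma AA_succ (q : K) (h k : ℕ) : AA q h (k+1) = AA q h k + DD q h (k+1) :=
  Finset.sum_range_succ _ _

lemma bsum (q : K) (h k : ℕ) :
    AA q (h+1) (k+1) + AA q (h+1) k
      = (1-q^(h+1))*AA q h (k+1) + (1+q^(h+1))*AA q (h+2) k := by
  induction k with
  | zero =>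
    rw [AA_succ, AA_succ, AA_zero, AA_zero, AA_zero]
    linear_combination Pall q h 0 + DD_zero_succ q h
  | succ k ih =>
    linear_combination AA_succ q (h+1) (k+1) + AA_succ q (h+1) k + ih + Pall q h (k+1)
      - (1-q^(h+1)) * AA_succ q h (k+1) - (1+q^(h+1)) * AA_succ q (h+2) k

lemma dsum (q : K) (k : ℕ) : AA q 0 (k+1) + AA q 0 k = 2 * AA q 1 k := by
  induction k with
  | zero =>
    rw [AA_succ, AA_zero, AA_zero]
    simp only [DD, if_neg (Nat.one_ne_zero), qPoch_zero, gb_zero, Nat.add_zero]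
    norm_num
    ring
  | succ k ih =>
    have pt : DD q 0 (k+2) + DD q 0 (k+1) = 2 * DD q 1 (k+1) := by
      simp only [DD, if_neg (Nat.succ_ne_zero (k+1)), if_neg (Nat.succ_ne_zero k),
        qPoch_zero, gb_self, Nat.add_zero]
      ring
    linear_combination AA_succ q 0 (k+1) + AA_succ q 0 k + ih + pt - 2 * AA_succ q 1 k

def Bc (K : Type*) [Field K] (n : ℕ) (j : ℤ) : K := ((binom n j - binom n (j-1) : ℤ) : K)

lemma binom_pascal (n : ℕ) (j : ℤ) : binom (n+1) j = binom n j + binom n (j-1) := by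
  unfold binom
  rcases lt_trichotomy j 0 with hj | hj | hj
  · rw [if_neg (by omega), if_neg (by omega), if_neg (by omega)]; ring
  · subst hj; norm_num
  · obtain ⟨t, rfl⟩ : ∃ t : ℕ, j = (t:ℤ)+1 := ⟨(j-1).toNat, by omega⟩
    rw [if_pos (by omega), if_pos (by omega), if_pos (by omega)]
    rw [show ((t:ℤ)+1).toNat = t+1 from by omega, show ((t:ℤ)+1-1).toNat = t from by omega,
      Nat.choose_succ_succ]
    push_cast; ring

lemma Bc_pascal (n : ℕ) (j : ℤ) : Bc K (n+1) j = Bc K n j + Bc K n (j-1) := by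
  unfold Bc
  rw [binom_pascal, binom_pascal]
  push_cast; ring

lemma Bc_neg (n : ℕ) : Bc K n (-1) = 0 := by
  unfold Bc binom
  rw [if_neg (by omega), if_neg (by omega)]
  norm_num

lemma Bc_zero (n : ℕ) : Bc K n 0 = 1 := by
  unfold Bc binom
  rw [if_pos le_rfl, if_neg (by omega)]
  simp

lemma Bc_half (m : ℕ) : Bc K (2*m+1) ((m:ℤ)+1) = 0 := by
  unfold Bc binom
  rw [if_pos (by omega), if_pos (by omega),
    show ((m:ℤ)+1).toNat = m+1 from by omega, show ((m:ℤ)+1-1).toNat = m from by omega,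
    Nat.choose_symm_half]
  simp

lemma f_big (t q : K) : ∀ n h, n < h → f t q n h = 0 := by
  intro n
  induction n with
  | zero =>
    intro h hh
    match h, hh with
    | (h+1), _ => simp [f]
  | succ n ih =>
    intro h hh
    match h, hh with
    | (h+1), hh =>
      show (1 - q^(h+1)) * f t q n h + (1 - t * q^(h+2)) * f t q n (h+2) = 0
      rw [ih h (by omega), ih (h+2) (by omega)]
      ring

lemma peelA (c : ℤ → K) (a : ℕ → K) (M : ℤ) (m : ℕ) :
    ∑ k ∈ range (m+1), c (M-(k:ℤ)) * a k
      = c M * a 0 + ∑ k ∈ range m, c (M-1-(k:ℤ)) * a (k+1) := by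
  rw [Finset.sum_range_succ', add_comm]
  congr 1
  · norm_num
  · refine Finset.sum_congr rfl fun k _ => ?_
    congr 2
    push_cast; ring

lemma peelB (c : ℤ → K) (a : ℕ → K) (M : ℤ) (m : ℕ) (hc : c (M-(m:ℤ)-1) = 0) :
    ∑ k ∈ range (m+1), c (M-(k:ℤ)-1) * a k
      = ∑ k ∈ range m, c (M-1-(k:ℤ)) * a k := by
  rw [Finset.sum_range_succ, hc, zero_mul, add_zero]
  refine Finset.sum_congr rfl fun k _ => ?_
  congr 2
  ring

lemma juggle (c : ℤ → K) (a : ℕ → K) (M : ℤ) (m : ℕ)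
    (hc : c (M-(m:ℤ)-1) = 0) :
    ∑ k ∈ range (m+1), (c (M-(k:ℤ)) * a k + c (M-(k:ℤ)-1) * a k)
      = c M * a 0 + ∑ k ∈ range m, c (M-1-(k:ℤ)) * (a (k+1) + a k) := by
  rw [Finset.sum_add_distrib, peelA c a M m, peelB c a M m hc, add_assoc,
    ← Finset.sum_add_distrib]
  congr 1
  refine Finset.sum_congr rfl fun k _ => ?_
  ring

lemma key (q : K) (hq : q ≠ 0) :
    ∀ N m h, N = 2*m + h →
      f (-q⁻¹) q N h = ∑ k ∈ range (m+1), Bc K N ((m:ℤ)-(k:ℤ)) * AA q h k := by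
  intro N
  induction N with
  | zero =>
    intro m h hN
    obtain rfl : m = 0 := by omega
    obtain rfl : h = 0 := by omega
    rw [Finset.sum_range_one]
    norm_num [Bc_zero, AA_zero]
    simp [f, DD]
  | succ n ih =>
    intro m h hN
    cases h with
    | zero =>
      obtain ⟨m', rfl⟩ : ∃ m', m = m'+1 := ⟨m-1, by omega⟩
      have step : f (-q⁻¹) q (n+1) 0 = 2 * f (-q⁻¹) q n 1 := by
        show (1 - (-q⁻¹) * q) * f (-q⁻¹) q n 1 = _
        rw [show (1 - (-q⁻¹) * q : K) = 1 + q⁻¹ * q from by ring, inv_mul_cancel₀ hq]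
        norm_num
      rw [step, ih m' 1 (by omega)]
      push_cast
      symm
      trans (∑ k ∈ range (m'+1+1),
        (Bc K n ((m':ℤ)+1-(k:ℤ)) * AA q 0 k + Bc K n ((m':ℤ)+1-(k:ℤ)-1) * AA q 0 k))
      · refine Finset.sum_congr rfl fun k _ => ?_
        rw [Bc_pascal]
        ring
      rw [juggle (Bc K n) (AA q 0) ((m':ℤ)+1) (m'+1)
        (by rw [show (m':ℤ)+1-((m'+1:ℕ):ℤ)-1 = -1 from by push_cast; ring]; exact Bc_neg n)]
      have h0 : Bc K n ((m':ℤ)+1) = 0 := by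
        rw [show n = 2*m'+1 from by omega]; exact Bc_half m'
      rw [h0, zero_mul, zero_add, Finset.mul_sum]
      refine Finset.sum_congr rfl fun k _ => ?_
      rw [dsum, show (m':ℤ)+1-1-(k:ℤ) = (m':ℤ)-(k:ℤ) from by ring]
      ring
    | succ h' =>
      show (1 - q^(h'+1)) * f (-q⁻¹) q n h' + (1 - (-q⁻¹) * q^(h'+2)) * f (-q⁻¹) q n (h'+2)
        = _
      have hw : (1 - (-q⁻¹) * q^(h'+2) : K) = 1 + q^(h'+1) := by
        have hc : (q⁻¹ * q : K) = 1 := inv_mul_cancel₀ hq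
        calc (1 - (-q⁻¹) * q^(h'+2) : K) = 1 + (q⁻¹*q) * q^(h'+1) := by ring
          _ = 1 + q^(h'+1) := by rw [hc, one_mul]
      rw [hw]
      rcases Nat.eq_zero_or_pos m with rfl | hm
      · have hn : n = h' := by omega
        rw [f_big (-q⁻¹) q n (h'+2) (by omega), ih 0 h' (by omega)]
        rw [Finset.sum_range_one, Finset.sum_range_one]
        norm_num [Bc_zero, czero]
      · obtain ⟨m'', rfl⟩ : ∃ m'', m = m''+1 := ⟨m-1, by omega⟩
        rw [ih (m''+1) h' (by omega), ih m'' (h'+2) (by omega)]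
        push_cast
        symm
        trans (∑ k ∈ range (m''+1+1),
          (Bc K n ((m'':ℤ)+1-(k:ℤ)) * AA q (h'+1) k
            + Bc K n ((m'':ℤ)+1-(k:ℤ)-1) * AA q (h'+1) k))
        · refine Finset.sum_congr rfl fun k _ => ?_
          rw [Bc_pascal]
          ring
        rw [juggle (Bc K n) (AA q (h'+1)) ((m'':ℤ)+1) (m''+1)
          (by rw [show (m'':ℤ)+1-((m''+1:ℕ):ℤ)-1 = -1 from by push_cast; ring]; exact Bc_neg n)]
        rw [peelA (Bc K n) (AA q h') ((m'':ℤ)+1) (m''+1), mul_add, Finset.mul_sum,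
          Finset.mul_sum, add_assoc, ← Finset.sum_add_distrib]
        congr 1
        · rw [czero]; ring
        · refine Finset.sum_congr rfl fun k _ => ?_
          rw [bsum, show (m'':ℤ)+1-1-(k:ℤ) = (m'':ℤ)-(k:ℤ) from by ring]
          ring

lemma thetaA (q : K) : ∀ k : ℕ,
    AA q 0 k = ∑ i ∈ Finset.Icc (-(k:ℤ)) (k:ℤ), (-1:K)^i * q^(i^2) := by
  intro k
  induction k with
  | zero => simp [AA, DD]
  | succ k ih =>
    have hset : Finset.Icc (-((k:ℤ)+1)) ((k:ℤ)+1)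
        = insert (-((k:ℤ)+1)) (insert ((k:ℤ)+1) (Finset.Icc (-(k:ℤ)) (k:ℤ))) := by
      ext x
      simp only [Finset.mem_Icc, Finset.mem_insert]
      omega
    rw [AA_succ, ih, show ((k+1:ℕ):ℤ) = (k:ℤ)+1 from by push_cast; ring, hset,
      Finset.sum_insert (by simp only [Finset.mem_Icc, Finset.mem_insert]; omega),
      Finset.sum_insert (by simp only [Finset.mem_Icc]; omega)]
    have t1 : ((-1:K))^(-((k:ℤ)+1)) = (-1:K)^(k+1) := by
      rw [zpow_neg, show ((k:ℤ)+1) = ((k+1:ℕ):ℤ) from by push_cast; ring, zpow_natCast]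
      rcases neg_one_pow_eq_or K (k+1) with h | h <;> rw [h] <;> norm_num
    have t2 : (q:K)^((-((k:ℤ)+1))^2) = q^((k+1)^2) := by
      rw [show (-((k:ℤ)+1))^2 = (((k+1)^2:ℕ):ℤ) from by push_cast; ring, zpow_natCast]
    have t3 : ((-1:K))^(((k:ℤ)+1)) = (-1:K)^(k+1) := by
      rw [show ((k:ℤ)+1) = ((k+1:ℕ):ℤ) from by push_cast; ring, zpow_natCast]
    have t4 : (q:K)^(((k:ℤ)+1)^2) = q^((k+1)^2) := by
      rw [show ((k:ℤ)+1)^2 = (((k+1)^2:ℕ):ℤ) from by push_cast; ring, zpow_natCast]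
    rw [t1, t2, t3, t4]
    simp only [DD, if_neg (Nat.succ_ne_zero k)]
    ring

end Aux14

theorem stmt_14 {K : Type*} [Field K] (q : K) (hq : q ≠ 0) (n : ℕ) :
    Etilde (-q⁻¹) q n = ∑ k ∈ Finset.range (n+1),
      (((binom (2*n) ((n:ℤ) - k) - binom (2*n) ((n:ℤ) - k - 1) : ℤ) : K)) *
        ∑ i ∈ Finset.Icc (-(k:ℤ)) (k:ℤ), (-1 : K) ^ i * q ^ (i^2) := by
  
  have hk := Aux14.key q hq (2*n) n 0 (by omega)
  show f (-q⁻¹) q (2*n) 0 = _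
  rw [hk]
  refine Finset.sum_congr rfl fun k _ => ?_
  rw [Aux14.thetaA]
  rfl
end
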